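/- arXiv:1910.02865 — 2 statements merged into one kernel-verified Lean document; each statement's English description precedes it below -/
import Mathlib

section
/- Let κ > 0 and u ∈ S^{d-1}. Then ∫_{S^{d-1}} M_u(ω)(ω·u)² dσ(ω) > 1/d. Consequently the leading eigenvalue λ∥ = ∫ M_u (ω·u)² dσ − 1/d of the Q-tensor Q_{M_u} = ∫ M_u (ω⊗ω − Id/d) dσ is strictly positive, so it is strictly larger than the other eigenvalue −λ∥/(d−1), and u spans the leading eigendirection of Q_{M_u}. -/
open MeasureTheory Metric
open scoped RealInnerProductSpace

/-- The map induced on the unit sphere by a linear isometry of `EuclideanSpace ℝ (Fin d)`. -/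
noncomputable def sphereRot {d : ℕ}
    (e : EuclideanSpace ℝ (Fin d) ≃ₗᵢ[ℝ] EuclideanSpace ℝ (Fin d))
    (ω : sphere (0 : EuclideanSpace ℝ (Fin d)) 1) :
    sphere (0 : EuclideanSpace ℝ (Fin d)) 1 :=
  ⟨e ω, by
    have hω := ω.2
    simp only [mem_sphere_iff_norm, sub_zero] at hω ⊢
    rw [e.norm_map]
    exact hω⟩

variable {d : ℕ}

lemma continuous_sphereRot (e : EuclideanSpace ℝ (Fin d) ≃ₗᵢ[ℝ] EuclideanSpace ℝ (Fin d)) :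
    Continuous (sphereRot e) :=
  Continuous.subtype_mk (e.continuous.comp continuous_subtype_val) _

lemma integrable_cont (σ : Measure (sphere (0 : EuclideanSpace ℝ (Fin d)) 1))
    [IsProbabilityMeasure σ] (f : sphere (0 : EuclideanSpace ℝ (Fin d)) 1 → ℝ)
    (hf : Continuous f) : Integrable f σ :=
  hf.integrable_of_hasCompactSupport (HasCompactSupport.of_compactSpace f)

lemma integral_rot (σ : Measure (sphere (0 : EuclideanSpace ℝ (Fin d)) 1))
    (hσ : ∀ e : EuclideanSpace ℝ (Fin d) ≃ₗᵢ[ℝ] EuclideanSpace ℝ (Fin d),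
      σ.map (sphereRot e) = σ)
    (e : EuclideanSpace ℝ (Fin d) ≃ₗᵢ[ℝ] EuclideanSpace ℝ (Fin d))
    (f : sphere (0 : EuclideanSpace ℝ (Fin d)) 1 → ℝ) (hf : Continuous f) :
    ∫ ω, f (sphereRot e ω) ∂σ = ∫ ω, f ω ∂σ := by
  conv_rhs => rw [← hσ e]
  rw [integral_map (continuous_sphereRot e).aemeasurable]
  rw [hσ e]
  exact hf.aestronglyMeasurable

lemma integral_inner_congr (σ : Measure (sphere (0 : EuclideanSpace ℝ (Fin d)) 1))
    (hσ : ∀ e : EuclideanSpace ℝ (Fin d) ≃ₗᵢ[ℝ] EuclideanSpace ℝ (Fin d),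
      σ.map (sphereRot e) = σ)
    (g : ℝ → ℝ) (hg : Continuous g) (v w : EuclideanSpace ℝ (Fin d)) (hvw : ‖v‖ = ‖w‖) :
    ∫ ω, g ⟪(ω : EuclideanSpace ℝ (Fin d)), v⟫ ∂σ
      = ∫ ω, g ⟪(ω : EuclideanSpace ℝ (Fin d)), w⟫ ∂σ := by
  set e := Submodule.reflection (ℝ ∙ (v - w))ᗮ with he
  have hev : e v = w := Submodule.reflection_sub hvw
  have key : ∀ ω : sphere (0 : EuclideanSpace ℝ (Fin d)) 1,
      ⟪((sphereRot e ω : sphere (0 : EuclideanSpace ℝ (Fin d)) 1) :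
        EuclideanSpace ℝ (Fin d)), w⟫ = ⟪(ω : EuclideanSpace ℝ (Fin d)), v⟫ := by
    intro ω
    have : ((sphereRot e ω : sphere (0 : EuclideanSpace ℝ (Fin d)) 1) :
        EuclideanSpace ℝ (Fin d)) = e (ω : EuclideanSpace ℝ (Fin d)) := rfl
    rw [this, ← hev, e.inner_map_map]
  calc ∫ ω, g ⟪(ω : EuclideanSpace ℝ (Fin d)), v⟫ ∂σ
      = ∫ ω, g ⟪((sphereRot e ω : sphere (0 : EuclideanSpace ℝ (Fin d)) 1) :
          EuclideanSpace ℝ (Fin d)), w⟫ ∂σ := by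
        congr 1; funext ω; rw [key]
    _ = ∫ ω, g ⟪(ω : EuclideanSpace ℝ (Fin d)), w⟫ ∂σ := by
        exact integral_rot σ hσ e
          (fun ω => g ⟪(ω : EuclideanSpace ℝ (Fin d)), w⟫)
          (hg.comp ((continuous_subtype_val.inner continuous_const)))

lemma ae_inner_congr (σ : Measure (sphere (0 : EuclideanSpace ℝ (Fin d)) 1))
    (hσ : ∀ e : EuclideanSpace ℝ (Fin d) ≃ₗᵢ[ℝ] EuclideanSpace ℝ (Fin d),
      σ.map (sphereRot e) = σ)
    (c : ℝ) (v w : EuclideanSpace ℝ (Fin d)) (hvw : ‖v‖ = ‖w‖)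
    (h : ∀ᵐ ω : sphere (0 : EuclideanSpace ℝ (Fin d)) 1 ∂σ, ⟪(ω : EuclideanSpace ℝ (Fin d)), v⟫ ^ 2 = c) :
    ∀ᵐ ω : sphere (0 : EuclideanSpace ℝ (Fin d)) 1 ∂σ, ⟪(ω : EuclideanSpace ℝ (Fin d)), w⟫ ^ 2 = c := by
  set e := Submodule.reflection (ℝ ∙ (w - v))ᗮ with he
  have hew : e w = v := Submodule.reflection_sub hvw.symm
  rw [← hσ e] at h
  have hcont : Continuous fun ω : sphere (0 : EuclideanSpace ℝ (Fin d)) 1 =>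
      ⟪(ω : EuclideanSpace ℝ (Fin d)), v⟫ ^ 2 :=
    (continuous_subtype_val.inner continuous_const).pow 2
  have hmeas : MeasurableSet {ω : sphere (0 : EuclideanSpace ℝ (Fin d)) 1 |
      ⟪(ω : EuclideanSpace ℝ (Fin d)), v⟫ ^ 2 = c} :=
    hcont.measurable (measurableSet_singleton c)
  rw [MeasureTheory.ae_map_iff (continuous_sphereRot e).aemeasurable hmeas] at h
  filter_upwards [h] with ω hω
  have : ((sphereRot e ω : sphere (0 : EuclideanSpace ℝ (Fin d)) 1) :
      EuclideanSpace ℝ (Fin d)) = e (ω : EuclideanSpace ℝ (Fin d)) := rfl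
  rw [this, ← hew, e.inner_map_map] at hω
  exact hω

lemma sphere_moment2 (hd : 1 ≤ d) (σ : Measure (sphere (0 : EuclideanSpace ℝ (Fin d)) 1))
    [IsProbabilityMeasure σ]
    (hσ : ∀ e : EuclideanSpace ℝ (Fin d) ≃ₗᵢ[ℝ] EuclideanSpace ℝ (Fin d),
      σ.map (sphereRot e) = σ)
    (u : EuclideanSpace ℝ (Fin d)) (hu : ‖u‖ = 1) :
    (∫ ω, ⟪(ω : EuclideanSpace ℝ (Fin d)), u⟫ ^ 2 ∂σ) = 1 / d := by
  set I := ∫ ω, ⟪(ω : EuclideanSpace ℝ (Fin d)), u⟫ ^ 2 ∂σ with hI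
  have hinner : ∀ v : EuclideanSpace ℝ (Fin d), ‖v‖ = 1 →
      (∫ ω, ⟪(ω : EuclideanSpace ℝ (Fin d)), v⟫ ^ 2 ∂σ) = I := by
    intro v hv
    exact integral_inner_congr σ hσ (fun x => x ^ 2) (continuous_pow 2) v u (by rw [hv, hu])
  have h1 : ∀ i : Fin d,
      (∫ ω, ⟪(ω : EuclideanSpace ℝ (Fin d)), EuclideanSpace.single i (1:ℝ)⟫ ^ 2 ∂σ) = I :=
    fun i => hinner _ (by simp [EuclideanSpace.norm_single])
  have h2 : ∑ i : Fin d,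
      (∫ ω, ⟪(ω : EuclideanSpace ℝ (Fin d)), EuclideanSpace.single i (1:ℝ)⟫ ^ 2 ∂σ)
      = ∫ ω, ∑ i : Fin d,
        ⟪(ω : EuclideanSpace ℝ (Fin d)), EuclideanSpace.single i (1:ℝ)⟫ ^ 2 ∂σ :=
    (integral_finset_sum _ (fun i _ => integrable_cont σ _
      ((continuous_subtype_val.inner continuous_const).pow 2))).symm
  have h3 : ∀ ω : sphere (0 : EuclideanSpace ℝ (Fin d)) 1,
      ∑ i : Fin d, ⟪(ω : EuclideanSpace ℝ (Fin d)), EuclideanSpace.single i (1:ℝ)⟫ ^ 2 = 1 := by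
    intro ω
    have hn : ‖(ω : EuclideanSpace ℝ (Fin d))‖ = 1 := by
      have := ω.2; simpa [mem_sphere_iff_norm] using this
    have : ∑ i : Fin d, ⟪(ω : EuclideanSpace ℝ (Fin d)), EuclideanSpace.single i (1:ℝ)⟫ ^ 2
        = ⟪(ω : EuclideanSpace ℝ (Fin d)), (ω : EuclideanSpace ℝ (Fin d))⟫ := by
      rw [PiLp.inner_apply]
      refine Finset.sum_congr rfl fun i _ => ?_
      simp [EuclideanSpace.inner_single_right, sq, RCLike.inner_apply]
    rw [this, real_inner_self_eq_norm_sq, hn]; norm_num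
  have h4 : (d : ℝ) * I = 1 := by
    have : ∑ i : Fin d, I = (d : ℝ) * I := by
      simp [Finset.sum_const, Finset.card_univ, mul_comm]
    rw [← this, ← Finset.sum_congr rfl (fun i _ => h1 i), h2]
    rw [integral_congr_ae (Filter.Eventually.of_forall h3)]
    simp
  have hd0 : (d : ℝ) ≠ 0 := by positivity
  field_simp at h4 ⊢
  linarith

set_option maxHeartbeats 1000000 in
lemma sphere_not_ae_const (hd : 2 ≤ d)
    (σ : Measure (sphere (0 : EuclideanSpace ℝ (Fin d)) 1)) [IsProbabilityMeasure σ]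
    (hσ : ∀ e : EuclideanSpace ℝ (Fin d) ≃ₗᵢ[ℝ] EuclideanSpace ℝ (Fin d),
      σ.map (sphereRot e) = σ)
    (u : EuclideanSpace ℝ (Fin d)) (hu : ‖u‖ = 1)
    (h : ∀ᵐ ω : sphere (0 : EuclideanSpace ℝ (Fin d)) 1 ∂σ,
      ⟪(ω : EuclideanSpace ℝ (Fin d)), u⟫ ^ 2 = 1 / (d : ℝ)) : False := by
  have hd0 : (0:ℝ) < d := by positivity
  have hdpos : (0:ℝ) < 1 / (d : ℝ) := by positivity
  set i0 : Fin d := ⟨0, by omega⟩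
  set i1 : Fin d := ⟨1, by omega⟩
  have hne : i0 ≠ i1 := by simp [i0, i1, Fin.ext_iff]
  set v0 : EuclideanSpace ℝ (Fin d) := EuclideanSpace.single i0 (1:ℝ) with hv0
  set v1 : EuclideanSpace ℝ (Fin d) := EuclideanSpace.single i1 (1:ℝ) with hv1
  have hv0n : ‖v0‖ = 1 := by simp [v0, EuclideanSpace.norm_single]
  have hv1n : ‖v1‖ = 1 := by simp [v1, EuclideanSpace.norm_single]
  have hortho : ⟪v0, v1⟫ = 0 := by
    simp [v0, v1, EuclideanSpace.inner_single_right, EuclideanSpace.single_apply, hne, hne.symm]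
  have hsum_sq : ‖v0 + v1‖ ^ 2 = 2 := by
    rw [norm_add_sq_real, hortho, hv0n, hv1n]
    ring
  have hsumn : ‖v0 + v1‖ = Real.sqrt 2 := by
    rw [← Real.sqrt_sq (norm_nonneg _), hsum_sq]
  set s : ℝ := (Real.sqrt 2)⁻¹ with hs
  have hsq2 : Real.sqrt 2 > 0 := by positivity
  set v2 : EuclideanSpace ℝ (Fin d) := s • (v0 + v1) with hv2
  have hv2n : ‖v2‖ = 1 := by
    rw [hv2, norm_smul, hsumn, hs, Real.norm_eq_abs, abs_inv, abs_of_pos hsq2]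
    field_simp
  have h0 := ae_inner_congr σ hσ (1/(d:ℝ)) u v0 (by rw [hu, hv0n]) h
  have h1 := ae_inner_congr σ hσ (1/(d:ℝ)) u v1 (by rw [hu, hv1n]) h
  have h2 := ae_inner_congr σ hσ (1/(d:ℝ)) u v2 (by rw [hu, hv2n]) h
  obtain ⟨ω, e0, e1, e2⟩ := ((h0.and (h1.and h2)).exists)
  set a : ℝ := ⟪(ω : EuclideanSpace ℝ (Fin d)), v0⟫ with ha
  set b : ℝ := ⟪(ω : EuclideanSpace ℝ (Fin d)), v1⟫ with hb
  have hab2 : ⟪(ω : EuclideanSpace ℝ (Fin d)), v2⟫ = s * (a + b) := by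
    rw [hv2, real_inner_smul_right, inner_add_right]
  rw [hab2] at e2
  have hs2 : s ^ 2 = 1 / 2 := by
    rw [hs, inv_pow, Real.sq_sqrt (by norm_num : (0:ℝ) ≤ 2)]
    norm_num
  have e2' : (a + b) ^ 2 = 2 / d := by
    have h' : s ^ 2 * (a + b) ^ 2 = 1 / d := by rw [← mul_pow]; exact e2
    rw [hs2] at h'
    field_simp at h' ⊢
    linarith
  have hab : a * b = 0 := by nlinarith
  have habsq : (a * b) ^ 2 = (1 / (d:ℝ)) * (1 / (d:ℝ)) := by
    rw [mul_pow, e0, e1]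
  rw [hab] at habsq
  nlinarith [hdpos]


/-- `∫ M_u (ω·u)² dσ > 1/d`; consequently the eigenvalue
`λ∥ = ∫ M_u (ω·u)² dσ − 1/d` of the Q-tensor is strictly positive and strictly larger than
the other eigenvalue `−λ∥/(d−1)`. -/
theorem stmt5 (d : ℕ) (hd : 2 ≤ d)
    (σ : Measure (sphere (0 : EuclideanSpace ℝ (Fin d)) 1))
    [IsProbabilityMeasure σ]
    (hσ : ∀ e : EuclideanSpace ℝ (Fin d) ≃ₗᵢ[ℝ] EuclideanSpace ℝ (Fin d),
      σ.map (sphereRot e) = σ)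
    (κ : ℝ) (hκ : 0 < κ)
    (u : sphere (0 : EuclideanSpace ℝ (Fin d)) 1)
    (Z : ℝ)
    (hZ : Z = ∫ ω, Real.exp (κ / 2 *
        ⟪(ω : EuclideanSpace ℝ (Fin d)), (u : EuclideanSpace ℝ (Fin d))⟫ ^ 2) ∂σ)
    (M : sphere (0 : EuclideanSpace ℝ (Fin d)) 1 → ℝ)
    (hM : ∀ ω, M ω = Real.exp (κ / 2 *
        ⟪(ω : EuclideanSpace ℝ (Fin d)), (u : EuclideanSpace ℝ (Fin d))⟫ ^ 2) / Z)
    (lampar : ℝ)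
    (hlam : lampar = (∫ ω, M ω *
        ⟪(ω : EuclideanSpace ℝ (Fin d)), (u : EuclideanSpace ℝ (Fin d))⟫ ^ 2 ∂σ) - 1 / (d : ℝ)) :
    (1 / (d : ℝ) < ∫ ω, M ω *
        ⟪(ω : EuclideanSpace ℝ (Fin d)), (u : EuclideanSpace ℝ (Fin d))⟫ ^ 2 ∂σ) ∧
    0 < lampar ∧ -(lampar / ((d : ℝ) - 1)) < lampar := by
  have hu1 : ‖(u : EuclideanSpace ℝ (Fin d))‖ = 1 := by
    have := u.2; simpa [mem_sphere_iff_norm] using this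
  have hdnat : 0 < d := by omega
  have hd0 : (0:ℝ) < d := by exact_mod_cast hdnat
  let t : sphere (0 : EuclideanSpace ℝ (Fin d)) 1 → ℝ :=
    fun ω => ⟪(ω : EuclideanSpace ℝ (Fin d)), (u : EuclideanSpace ℝ (Fin d))⟫
  have ht : Continuous t := continuous_subtype_val.inner continuous_const
  let g : sphere (0 : EuclideanSpace ℝ (Fin d)) 1 → ℝ :=
    fun ω => Real.exp (κ / 2 * t ω ^ 2)
  have hg : Continuous g := Real.continuous_exp.comp (continuous_const.mul (ht.pow 2))
  have hgint : Integrable g σ := integrable_cont σ g hg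
  have hZ' : Z = ∫ ω, g ω ∂σ := hZ
  have hZge : (1:ℝ) ≤ Z := by
    rw [hZ']
    calc (1:ℝ) = ∫ _, (1:ℝ) ∂σ := by simp
    _ ≤ ∫ ω, g ω ∂σ := integral_mono (integrable_const 1) hgint
        (fun ω => Real.one_le_exp (by positivity))
  have hZpos : 0 < Z := lt_of_lt_of_le one_pos hZge
  have hmom : ∫ ω, t ω ^ 2 ∂σ = 1 / d :=
    sphere_moment2 (by omega) σ hσ _ hu1
  let c : ℝ := Real.exp (κ / 2 * (1 / d))
  have hint1 : Integrable (fun ω => g ω * (t ω ^ 2 - 1 / d)) σ :=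
    integrable_cont σ _ (hg.mul ((ht.pow 2).sub continuous_const))
  have hint2 : Integrable (fun ω => (g ω - c) * (t ω ^ 2 - 1 / d)) σ :=
    integrable_cont σ _ ((hg.sub continuous_const).mul ((ht.pow 2).sub continuous_const))
  have hκ2 : 0 ≤ κ / 2 := by positivity
  have hptnn : ∀ ω, 0 ≤ (g ω - c) * (t ω ^ 2 - 1 / d) := by
    intro ω
    rcases le_total (t ω ^ 2) (1 / d) with h | h
    · apply mul_nonneg_of_nonpos_of_nonpos
      · have : g ω ≤ c := Real.exp_le_exp.mpr (mul_le_mul_of_nonneg_left h hκ2)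
        linarith
      · linarith
    · apply mul_nonneg
      · have : c ≤ g ω := Real.exp_le_exp.mpr (mul_le_mul_of_nonneg_left h hκ2)
        linarith
      · linarith
  have hzero : ∫ ω, c * (t ω ^ 2 - 1 / d) ∂σ = 0 := by
    rw [integral_const_mul, integral_sub (integrable_cont σ (fun ω => t ω ^ 2) (ht.pow 2))
      (integrable_const _), hmom]
    simp
  have heq : ∫ ω, (g ω - c) * (t ω ^ 2 - 1 / d) ∂σ
      = ∫ ω, g ω * (t ω ^ 2 - 1 / d) ∂σ := by
    have hrw : (fun ω => (g ω - c) * (t ω ^ 2 - 1 / d))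
        = fun ω => g ω * (t ω ^ 2 - 1 / d) - c * (t ω ^ 2 - 1 / d) := by
      funext ω; ring
    rw [hrw, integral_sub hint1 (integrable_cont σ (fun ω => c * (t ω ^ 2 - 1 / d))
      (continuous_const.mul ((ht.pow 2).sub continuous_const))), hzero, sub_zero]
  have hKnn : 0 ≤ ∫ ω, (g ω - c) * (t ω ^ 2 - 1 / d) ∂σ :=
    integral_nonneg hptnn
  have hKne : ∫ ω, (g ω - c) * (t ω ^ 2 - 1 / d) ∂σ ≠ 0 := by
    intro h0
    have hae0 := (integral_eq_zero_iff_of_nonneg hptnn hint2).mp h0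
    have hae : ∀ᵐ ω : sphere (0 : EuclideanSpace ℝ (Fin d)) 1 ∂σ,
        ⟪(ω : EuclideanSpace ℝ (Fin d)), (u : EuclideanSpace ℝ (Fin d))⟫ ^ 2 = 1 / (d : ℝ) := by
      filter_upwards [hae0] with ω hω
      have hω' : (g ω - c) * (t ω ^ 2 - 1 / d) = 0 := hω
      rcases mul_eq_zero.mp hω' with h | h
      · have : g ω = c := by linarith
        have h2 : κ / 2 * t ω ^ 2 = κ / 2 * (1 / (d:ℝ)) := Real.exp_injective this
        have hκ2' : κ / 2 ≠ 0 := by positivity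
        exact mul_left_cancel₀ hκ2' h2
      · have : t ω ^ 2 = 1 / (d:ℝ) := by linarith
        exact this
    exact sphere_not_ae_const hd σ hσ _ hu1 hae
  have hKpos : 0 < ∫ ω, (g ω - c) * (t ω ^ 2 - 1 / d) ∂σ :=
    hKnn.lt_of_ne (Ne.symm hKne)
  have hKpos' : 0 < ∫ ω, g ω * (t ω ^ 2 - 1 / d) ∂σ := heq ▸ hKpos
  have hsplit : ∫ ω, g ω * (t ω ^ 2 - 1 / d) ∂σ
      = (∫ ω, g ω * t ω ^ 2 ∂σ) - Z / d := by
    have hrw : (fun ω => g ω * (t ω ^ 2 - 1 / d))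
        = fun ω => g ω * t ω ^ 2 - g ω * (1 / d) := by
      funext ω; ring
    rw [hrw, integral_sub (integrable_cont σ (fun ω => g ω * t ω ^ 2) (hg.mul (ht.pow 2)))
      (integrable_cont σ (fun ω => g ω * (1 / d)) (hg.mul continuous_const))]
    rw [integral_mul_const, ← hZ']
    ring
  have hMint : ∫ ω, M ω * t ω ^ 2 ∂σ = (∫ ω, g ω * t ω ^ 2 ∂σ) / Z := by
    have hfun : (fun ω => M ω * t ω ^ 2) = fun ω => g ω * t ω ^ 2 / Z := by
      funext ω
      rw [hM ω]
      show Real.exp (κ / 2 * t ω ^ 2) / Z * t ω ^ 2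
        = Real.exp (κ / 2 * t ω ^ 2) * t ω ^ 2 / Z
      ring
    calc ∫ ω, M ω * t ω ^ 2 ∂σ = ∫ ω, g ω * t ω ^ 2 / Z ∂σ := by rw [hfun]
      _ = (∫ ω, g ω * t ω ^ 2 ∂σ) / Z := integral_div Z _
  have hmain : 1 / (d : ℝ) < ∫ ω, M ω * t ω ^ 2 ∂σ := by
    rw [hMint]
    rw [lt_div_iff₀ hZpos]
    have : ∫ ω, g ω * t ω ^ 2 ∂σ = (∫ ω, g ω * (t ω ^ 2 - 1 / d) ∂σ) + Z / d := by
      rw [hsplit]; ring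
    rw [this]
    have : 1 / (d:ℝ) * Z = Z / d := by ring
    rw [this]
    linarith
  have hmain' : 1 / (d : ℝ) < ∫ ω, M ω *
      ⟪(ω : EuclideanSpace ℝ (Fin d)), (u : EuclideanSpace ℝ (Fin d))⟫ ^ 2 ∂σ := hmain
  have hlampos : 0 < lampar := by rw [hlam]; linarith
  refine ⟨hmain', hlampos, ?_⟩
  have hd1 : (1:ℝ) ≤ (d:ℝ) - 1 := by
    have : (2:ℝ) ≤ d := by exact_mod_cast hd
    linarith
  have : 0 < lampar / ((d:ℝ) - 1) := div_pos hlampos (by linarith)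
  linarith
end

section
/- Let κ > 0 and u₀ ∈ S^{d-1}, and take ρ̂ ∈ ℝ and û ∈ ℝ^d with û·u₀ = 0. Define f̂₁(ω) = M_{u₀}(ω)(ρ̂ + (ω·u₀)(ω·û)) and its Q-tensor Q_{f̂₁} = ∫_{S^{d-1}} f̂₁(ω) (ω⊗ω − (1/d)·Id) dσ(ω). Then, with λ∥ = ∫ M_{u₀}(ω·u₀)² dσ − 1/d and λ⊥ = −λ∥/(d−1), one has P_{u₀⊥}(Q_{f̂₁} u₀) = ((λ∥ − λ⊥)/κ) û, where P_{u₀⊥} = Id − u₀⊗u₀. -/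
open MeasureTheory Metric
open scoped RealInnerProductSpace

lemma absmul_le8 {x y cx cy : ℝ} (hx : |x| ≤ cx) (hy : |y| ≤ cy) : |x * y| ≤ cx * cy := by
  rw [abs_mul]; exact mul_le_mul hx hy (abs_nonneg _) ((abs_nonneg _).trans hx)

noncomputable def reflLM (d : ℕ) (m : EuclideanSpace ℝ (Fin d)) :
    EuclideanSpace ℝ (Fin d) →ₗ[ℝ] EuclideanSpace ℝ (Fin d) where
  toFun x := x - (2 * ⟪m, x⟫) • m
  map_add' x y := by
    simp only [inner_add_right]; module
  map_smul' c x := by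
    simp only [inner_smul_right, RingHom.id_apply]; module

lemma reflLM_inner (m : EuclideanSpace ℝ (Fin d)) (hm : ‖m‖ = 1)
    (x y : EuclideanSpace ℝ (Fin d)) : ⟪reflLM d m x, reflLM d m y⟫ = ⟪x, y⟫ := by
  have hmm : ⟪m, m⟫ = 1 := by
    rw [real_inner_self_eq_norm_sq, hm]; norm_num
  simp only [reflLM, LinearMap.coe_mk, AddHom.coe_mk, inner_sub_left, inner_sub_right,
    real_inner_smul_left, real_inner_smul_right, hmm]
  rw [real_inner_comm x m]
  ring

noncomputable def rfl2 (d : ℕ) (m : EuclideanSpace ℝ (Fin d)) (hm : ‖m‖ = 1) :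
    EuclideanSpace ℝ (Fin d) ≃ₗᵢ[ℝ] EuclideanSpace ℝ (Fin d) :=
  ((reflLM d m).isometryOfInner (reflLM_inner m hm)).toLinearIsometryEquiv rfl

lemma rfl2_apply (m : EuclideanSpace ℝ (Fin d)) (hm : ‖m‖ = 1) (x : EuclideanSpace ℝ (Fin d)) :
    rfl2 d m hm x = x - (2 * ⟪m, x⟫) • m := rfl

noncomputable def rotLM (d : ℕ) (t : ℝ) (u n : EuclideanSpace ℝ (Fin d)) :
    EuclideanSpace ℝ (Fin d) →ₗ[ℝ] EuclideanSpace ℝ (Fin d) where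
  toFun x := x + ((Real.cos t - 1) * ⟪u, x⟫ + Real.sin t * ⟪n, x⟫) • u
      + ((Real.cos t - 1) * ⟪n, x⟫ - Real.sin t * ⟪u, x⟫) • n
  map_add' x y := by
    simp only [inner_add_right]; module
  map_smul' c x := by
    simp only [inner_smul_right, RingHom.id_apply]; module

lemma rotLM_inner (t : ℝ) (u n : EuclideanSpace ℝ (Fin d)) (hu : ‖u‖ = 1) (hn : ‖n‖ = 1)
    (hun : ⟪u, n⟫ = 0) (x y : EuclideanSpace ℝ (Fin d)) :
    ⟪rotLM d t u n x, rotLM d t u n y⟫ = ⟪x, y⟫ := by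
  have huu : ⟪u, u⟫ = 1 := by rw [real_inner_self_eq_norm_sq, hu]; norm_num
  have hnn : ⟪n, n⟫ = 1 := by rw [real_inner_self_eq_norm_sq, hn]; norm_num
  have hnu : ⟪n, u⟫ = 0 := by rw [real_inner_comm]; exact hun
  have hcs : Real.sin t ^ 2 + Real.cos t ^ 2 = 1 := Real.sin_sq_add_cos_sq t
  simp only [rotLM, LinearMap.coe_mk, AddHom.coe_mk, inner_add_left, inner_add_right,
    inner_sub_left, inner_sub_right, real_inner_smul_left, real_inner_smul_right,
    huu, hnn, hun, hnu]
  have h1 : ⟪x,u⟫ = ⟪u,x⟫ := real_inner_comm u x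
  have h2 : ⟪x,n⟫ = ⟪n,x⟫ := real_inner_comm n x
  simp only [h1, h2]
  linear_combination (⟪u,x⟫ * ⟪u,y⟫ + ⟪n,x⟫ * ⟪n,y⟫) * hcs

noncomputable def rotI (d : ℕ) (t : ℝ) (u n : EuclideanSpace ℝ (Fin d)) (hu : ‖u‖ = 1)
    (hn : ‖n‖ = 1) (hun : ⟪u, n⟫ = 0) :
    EuclideanSpace ℝ (Fin d) ≃ₗᵢ[ℝ] EuclideanSpace ℝ (Fin d) :=
  ((rotLM d t u n).isometryOfInner (rotLM_inner t u n hu hn hun)).toLinearIsometryEquiv rfl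

lemma rotI_apply (t : ℝ) (u n : EuclideanSpace ℝ (Fin d)) (hu : ‖u‖ = 1)
    (hn : ‖n‖ = 1) (hun : ⟪u, n⟫ = 0) (x : EuclideanSpace ℝ (Fin d)) :
    rotI d t u n hu hn hun x = x + ((Real.cos t - 1) * ⟪u, x⟫ + Real.sin t * ⟪n, x⟫) • u
      + ((Real.cos t - 1) * ⟪n, x⟫ - Real.sin t * ⟪u, x⟫) • n := rfl

section Sphere

variable (σ : Measure (sphere (0 : EuclideanSpace ℝ (Fin d)) 1)) [IsProbabilityMeasure σ]
  (hσ : ∀ e : EuclideanSpace ℝ (Fin d) ≃ₗᵢ[ℝ] EuclideanSpace ℝ (Fin d),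
      σ.map (sphereRot e) = σ)
include hσ

omit hσ in
lemma contInner (x : EuclideanSpace ℝ (Fin d)) :
    Continuous fun ω : sphere (0 : EuclideanSpace ℝ (Fin d)) 1 =>
      ⟪(ω : EuclideanSpace ℝ (Fin d)), x⟫ :=
  continuous_subtype_val.inner continuous_const

omit hσ in
lemma contInt (g : sphere (0 : EuclideanSpace ℝ (Fin d)) 1 → ℝ) (hg : Continuous g) :
    Integrable g σ :=
  hg.integrable_of_hasCompactSupport (HasCompactSupport.of_compactSpace g)

lemma integral_sphereRot (e : EuclideanSpace ℝ (Fin d) ≃ₗᵢ[ℝ] EuclideanSpace ℝ (Fin d))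
    (g : sphere (0 : EuclideanSpace ℝ (Fin d)) 1 → ℝ) (hg : Continuous g) :
    ∫ ω, g (sphereRot e ω) ∂σ = ∫ ω, g ω ∂σ := by
  have hc : Continuous (sphereRot e) :=
    Continuous.subtype_mk (e.continuous.comp continuous_subtype_val) _
  conv_rhs => rw [← hσ e]
  rw [integral_map hc.aemeasurable hg.aestronglyMeasurable]

/-- key reflection lemma: odd integrals vanish -/
lemma odd_vanish (u n v : EuclideanSpace ℝ (Fin d))
    (huv : ⟪u, v⟫ = 0) (hnv : ⟪n, v⟫ = 0)
    (G : ℝ → ℝ → ℝ) (hG : Continuous fun p : ℝ × ℝ => G p.1 p.2) :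
    ∫ ω, G ⟪(ω : EuclideanSpace ℝ (Fin d)), u⟫ ⟪(ω : EuclideanSpace ℝ (Fin d)), n⟫ *
      ⟪(ω : EuclideanSpace ℝ (Fin d)), v⟫ ∂σ = 0 := by
  by_cases hv : v = 0
  · simp [hv, inner_zero_right]
  set g : sphere (0 : EuclideanSpace ℝ (Fin d)) 1 → ℝ := fun ω =>
    G ⟪(ω : EuclideanSpace ℝ (Fin d)), u⟫ ⟪(ω : EuclideanSpace ℝ (Fin d)), n⟫ *
      ⟪(ω : EuclideanSpace ℝ (Fin d)), v⟫ with hgdef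
  have hgc : Continuous g :=
    (hG.comp ((contInner u).prodMk (contInner n))).mul (contInner v)
  have hmv : ‖‖v‖⁻¹ • v‖ = 1 := by
    rw [norm_smul, norm_inv, norm_norm, inv_mul_cancel₀ (norm_ne_zero_iff.mpr hv)]
  set m : EuclideanSpace ℝ (Fin d) := ‖v‖⁻¹ • v with hmdef
  have key : ∀ ω, g (sphereRot (rfl2 d m hmv) ω) = - g ω := by
    intro ω
    have hco : ((sphereRot (rfl2 d m hmv) ω : EuclideanSpace ℝ (Fin d)))
        = (ω : EuclideanSpace ℝ (Fin d)) - (2 * ⟪m, (ω : EuclideanSpace ℝ (Fin d))⟫) • m := rfl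
    simp only [hgdef, hco, inner_sub_left, real_inner_smul_left]
    have h1 : ⟪m, u⟫ = 0 := by
      rw [hmdef, real_inner_smul_left, real_inner_comm, huv]; ring
    have h2 : ⟪m, n⟫ = 0 := by
      rw [hmdef, real_inner_smul_left, real_inner_comm, hnv]; ring
    have h3 : ⟪m, v⟫ = ‖v‖⁻¹ * (‖v‖ * ‖v‖) := by
      rw [hmdef, real_inner_smul_left, real_inner_self_eq_norm_mul_norm]
    have h4 : ⟪m, (ω : EuclideanSpace ℝ (Fin d))⟫
        = ‖v‖⁻¹ * ⟪(ω : EuclideanSpace ℝ (Fin d)), v⟫ := by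
      rw [hmdef, real_inner_smul_left, real_inner_comm]
    rw [h1, h2, h3, h4]
    have hvn : (‖v‖ : ℝ) ≠ 0 := norm_ne_zero_iff.mpr hv
    field_simp
    simp only [mul_zero, sub_zero, mul_div_cancel_right₀ _ hvn, mul_div_cancel_left₀ _ hvn]
    ring
  have h1 : ∫ ω, g (sphereRot (rfl2 d m hmv) ω) ∂σ = ∫ ω, g ω ∂σ :=
    integral_sphereRot σ hσ _ g hgc
  rw [integral_congr_ae (Filter.Eventually.of_forall key)] at h1
  rw [integral_neg] at h1
  linarith
end Sphere

section Sphere2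
set_option linter.unusedSectionVars false
variable (σ : Measure (sphere (0 : EuclideanSpace ℝ (Fin d)) 1)) [IsProbabilityMeasure σ]
  (hσ : ∀ e : EuclideanSpace ℝ (Fin d) ≃ₗᵢ[ℝ] EuclideanSpace ℝ (Fin d),
      σ.map (sphereRot e) = σ)
include hσ

/-- swap lemma: distribution of (⟪ω,u⟫,⟪ω,m₁⟫) = that of (⟪ω,u⟫,⟪ω,m₂⟫) for unit m₁ m₂ ⊥ u -/
lemma swapIntegral8 (u m₁ m₂ : EuclideanSpace ℝ (Fin d))
    (hm₁ : ‖m₁‖ = 1) (hm₂ : ‖m₂‖ = 1) (hum₁ : ⟪u, m₁⟫ = 0) (hum₂ : ⟪u, m₂⟫ = 0)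
    (G : ℝ → ℝ → ℝ) (hG : Continuous fun p : ℝ × ℝ => G p.1 p.2) :
    ∫ ω, G ⟪(ω : EuclideanSpace ℝ (Fin d)), u⟫ ⟪(ω : EuclideanSpace ℝ (Fin d)), m₁⟫ ∂σ
      = ∫ ω, G ⟪(ω : EuclideanSpace ℝ (Fin d)), u⟫ ⟪(ω : EuclideanSpace ℝ (Fin d)), m₂⟫ ∂σ := by
  by_cases heq : m₁ = m₂
  · rw [heq]
  have hvne : m₁ - m₂ ≠ 0 := sub_ne_zero_of_ne heq
  have hvn : ‖m₁ - m₂‖ ≠ 0 := norm_ne_zero_iff.mpr hvne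
  set m : EuclideanSpace ℝ (Fin d) := ‖m₁ - m₂‖⁻¹ • (m₁ - m₂) with hmdef
  have hmv : ‖m‖ = 1 := by
    rw [hmdef, norm_smul, norm_inv, norm_norm, inv_mul_cancel₀ hvn]
  set g : sphere (0 : EuclideanSpace ℝ (Fin d)) 1 → ℝ := fun ω =>
    G ⟪(ω : EuclideanSpace ℝ (Fin d)), u⟫ ⟪(ω : EuclideanSpace ℝ (Fin d)), m₁⟫ with hgdef
  have hgc : Continuous g := hG.comp ((contInner u).prodMk (contInner m₁))
  have hnorm2 : ‖m₁ - m₂‖ * ‖m₁ - m₂‖ = 2 - 2 * ⟪m₁, m₂⟫ := by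
    rw [← real_inner_self_eq_norm_mul_norm]
    simp only [inner_sub_left, inner_sub_right]
    have h1 : ⟪m₁, m₁⟫ = 1 := by rw [real_inner_self_eq_norm_sq, hm₁]; norm_num
    have h2 : ⟪m₂, m₂⟫ = 1 := by rw [real_inner_self_eq_norm_sq, hm₂]; norm_num
    rw [h1, h2, real_inner_comm m₁ m₂]; ring
  have key : ∀ ω, g (sphereRot (rfl2 d m hmv) ω)
      = G ⟪(ω : EuclideanSpace ℝ (Fin d)), u⟫ ⟪(ω : EuclideanSpace ℝ (Fin d)), m₂⟫ := by
    intro ω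
    have hco : ((sphereRot (rfl2 d m hmv) ω : EuclideanSpace ℝ (Fin d)))
        = (ω : EuclideanSpace ℝ (Fin d)) - (2 * ⟪m, (ω : EuclideanSpace ℝ (Fin d))⟫) • m := rfl
    simp only [hgdef, hco, inner_sub_left, real_inner_smul_left]
    have h1 : ⟪m, u⟫ = 0 := by
      rw [hmdef, real_inner_smul_left, inner_sub_left, real_inner_comm u m₁,
        real_inner_comm u m₂, hum₁, hum₂]; ring
    have h2 : ⟪m, m₁⟫ = ‖m₁ - m₂‖⁻¹ * (1 - ⟪m₁, m₂⟫) := by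
      rw [hmdef, real_inner_smul_left, inner_sub_left]
      have h1 : ⟪m₁, m₁⟫ = 1 := by rw [real_inner_self_eq_norm_sq, hm₁]; norm_num
      rw [h1, real_inner_comm m₁ m₂]
    have h4 : ⟪m, (ω : EuclideanSpace ℝ (Fin d))⟫
        = ‖m₁ - m₂‖⁻¹ * (⟪(ω : EuclideanSpace ℝ (Fin d)), m₁⟫
            - ⟪(ω : EuclideanSpace ℝ (Fin d)), m₂⟫) := by
      rw [hmdef, real_inner_smul_left, inner_sub_left,
        real_inner_comm (↑ω : EuclideanSpace ℝ (Fin d)) m₁,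
        real_inner_comm (↑ω : EuclideanSpace ℝ (Fin d)) m₂]
    rw [h1, h2, h4, mul_zero, sub_zero]
    congr 1
    have expand : 2 * (‖m₁ - m₂‖⁻¹ * (⟪(ω : EuclideanSpace ℝ (Fin d)), m₁⟫
          - ⟪(ω : EuclideanSpace ℝ (Fin d)), m₂⟫)) * (‖m₁ - m₂‖⁻¹ * (1 - ⟪m₁, m₂⟫))
        = (2 - 2 * ⟪m₁, m₂⟫) / (‖m₁ - m₂‖ * ‖m₁ - m₂‖) * (⟪(ω : EuclideanSpace ℝ (Fin d)), m₁⟫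
          - ⟪(ω : EuclideanSpace ℝ (Fin d)), m₂⟫) := by
      field_simp
    rw [expand, hnorm2, div_self, one_mul]
    · ring
    · rw [← hnorm2]; positivity
  calc ∫ ω, g ω ∂σ = ∫ ω, g (sphereRot (rfl2 d m hmv) ω) ∂σ :=
        (integral_sphereRot σ hσ _ g hgc).symm
    _ = _ := by rw [integral_congr_ae (Filter.Eventually.of_forall key)]
end Sphere2

section Sphere3
set_option linter.unusedSectionVars false
set_option maxHeartbeats 1000000
variable {d : ℕ}
variable (σ : Measure (sphere (0 : EuclideanSpace ℝ (Fin d)) 1)) [IsProbabilityMeasure σ]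
  (hσ : ∀ e : EuclideanSpace ℝ (Fin d) ≃ₗᵢ[ℝ] EuclideanSpace ℝ (Fin d),
      σ.map (sphereRot e) = σ)
include hσ

lemma derivIdentity8 (κ : ℝ) (hκ : 0 < κ) (u n v : EuclideanSpace ℝ (Fin d))
    (hu : ‖u‖ = 1) (hn : ‖n‖ = 1) (hun : ⟪u, n⟫ = 0) (huv : ⟪u, v⟫ = 0) :
    ∫ ω, Real.exp (κ/2 * ⟪(ω : EuclideanSpace ℝ (Fin d)), u⟫^2) *
      (κ * ⟪(ω : EuclideanSpace ℝ (Fin d)), u⟫^2 * ⟪(ω : EuclideanSpace ℝ (Fin d)), n⟫ *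
          ⟪(ω : EuclideanSpace ℝ (Fin d)), v⟫
        + ⟪(ω : EuclideanSpace ℝ (Fin d)), n⟫ * ⟪(ω : EuclideanSpace ℝ (Fin d)), v⟫
        - ⟪(ω : EuclideanSpace ℝ (Fin d)), u⟫^2 * ⟪n, v⟫) ∂σ = 0 := by
  have ca : Continuous fun ω : sphere (0 : EuclideanSpace ℝ (Fin d)) 1 =>
      ⟪(ω : EuclideanSpace ℝ (Fin d)), u⟫ := continuous_subtype_val.inner continuous_const
  have cb : Continuous fun ω : sphere (0 : EuclideanSpace ℝ (Fin d)) 1 =>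
      ⟪(ω : EuclideanSpace ℝ (Fin d)), n⟫ := continuous_subtype_val.inner continuous_const
  have cc : Continuous fun ω : sphere (0 : EuclideanSpace ℝ (Fin d)) 1 =>
      ⟪(ω : EuclideanSpace ℝ (Fin d)), v⟫ := continuous_subtype_val.inner continuous_const
  set A : sphere (0 : EuclideanSpace ℝ (Fin d)) 1 → ℝ := fun ω =>
    ⟪(ω : EuclideanSpace ℝ (Fin d)), u⟫ with hA
  set B : sphere (0 : EuclideanSpace ℝ (Fin d)) 1 → ℝ := fun ω =>
    ⟪(ω : EuclideanSpace ℝ (Fin d)), n⟫ with hB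
  set C : sphere (0 : EuclideanSpace ℝ (Fin d)) 1 → ℝ := fun ω =>
    ⟪(ω : EuclideanSpace ℝ (Fin d)), v⟫ with hC
  set k : ℝ := ⟪n, v⟫ with hk
  set P : ℝ → sphere (0 : EuclideanSpace ℝ (Fin d)) 1 → ℝ := fun t ω =>
    Real.cos t * A ω + Real.sin t * B ω with hP
  set P' : ℝ → sphere (0 : EuclideanSpace ℝ (Fin d)) 1 → ℝ := fun t ω =>
    -Real.sin t * A ω + Real.cos t * B ω with hP'
  set Q : ℝ → sphere (0 : EuclideanSpace ℝ (Fin d)) 1 → ℝ := fun t ω =>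
    C ω + ((Real.cos t - 1) * B ω - Real.sin t * A ω) * k with hQ
  set Q' : ℝ → sphere (0 : EuclideanSpace ℝ (Fin d)) 1 → ℝ := fun t ω =>
    (-Real.sin t * B ω - Real.cos t * A ω) * k with hQ'
  set F : ℝ → sphere (0 : EuclideanSpace ℝ (Fin d)) 1 → ℝ := fun t ω =>
    Real.exp (κ/2 * (P t ω)^2) * (P t ω * Q t ω) with hF
  set F' : ℝ → sphere (0 : EuclideanSpace ℝ (Fin d)) 1 → ℝ := fun t ω =>
    Real.exp (κ/2 * (P t ω)^2) * ((κ * P t ω * P' t ω) * (P t ω * Q t ω)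
      + P' t ω * Q t ω + P t ω * Q' t ω) with hF'
  -- pointwise derivative
  have hder : ∀ (ω : sphere (0 : EuclideanSpace ℝ (Fin d)) 1) (t : ℝ),
      HasDerivAt (fun s => F s ω) (F' t ω) t := by
    intro ω t
    have hp : HasDerivAt (fun t => Real.cos t * A ω + Real.sin t * B ω)
        (-Real.sin t * A ω + Real.cos t * B ω) t :=
      ((Real.hasDerivAt_cos t).mul_const _).add ((Real.hasDerivAt_sin t).mul_const _)
    have hq : HasDerivAt (fun t => C ω + ((Real.cos t - 1) * B ω - Real.sin t * A ω) * k)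
        ((-Real.sin t * B ω - Real.cos t * A ω) * k) t := by
      have := ((((Real.hasDerivAt_cos t).sub_const 1).mul_const (B ω)).sub
        ((Real.hasDerivAt_sin t).mul_const (A ω))).mul_const k
      exact this.const_add _
    have hexp : HasDerivAt (fun t => Real.exp (κ/2 * (Real.cos t * A ω + Real.sin t * B ω)^2))
        (Real.exp (κ/2 * (Real.cos t * A ω + Real.sin t * B ω)^2) *
          (κ/2 * (2 * (Real.cos t * A ω + Real.sin t * B ω)^1 *
            (-Real.sin t * A ω + Real.cos t * B ω)))) t :=
      ((hp.pow 2).const_mul (κ/2)).exp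
    have := hexp.mul (hp.mul hq)
    simp only [hF, hF', hP, hP', hQ, hQ']
    refine this.congr_deriv ?_
    simp only [Pi.mul_apply]
    ring
  -- continuity in ω
  have cP : ∀ t, Continuous (P t) := fun t =>
    (continuous_const.mul ca).add (continuous_const.mul cb)
  have cP' : ∀ t, Continuous (P' t) := fun t =>
    (continuous_const.mul ca).add (continuous_const.mul cb)
  have cQ : ∀ t, Continuous (Q t) := fun t =>
    cc.add (((continuous_const.mul cb).sub (continuous_const.mul ca)).mul continuous_const)
  have cQ' : ∀ t, Continuous (Q' t) := fun t =>
    ((continuous_const.mul cb).sub (continuous_const.mul ca)).mul continuous_const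
  have contF : ∀ t, Continuous (F t) := fun t =>
    (Real.continuous_exp.comp (continuous_const.mul ((cP t).pow 2))).mul ((cP t).mul (cQ t))
  have contF' : ∀ t, Continuous (F' t) := fun t =>
    (Real.continuous_exp.comp (continuous_const.mul ((cP t).pow 2))).mul
      (((((continuous_const.mul (cP t)).mul (cP' t)).mul ((cP t).mul (cQ t))).add
        ((cP' t).mul (cQ t))).add ((cP t).mul (cQ' t)))
  -- bounds
  have habs : ∀ (ω : sphere (0 : EuclideanSpace ℝ (Fin d)) 1) (x : EuclideanSpace ℝ (Fin d)),
      |⟪(ω : EuclideanSpace ℝ (Fin d)), x⟫| ≤ ‖x‖ := by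
    intro ω x
    have hω : ‖(ω : EuclideanSpace ℝ (Fin d))‖ = 1 := by
      have := ω.2; rwa [mem_sphere_zero_iff_norm] at this
    calc |⟪(ω : EuclideanSpace ℝ (Fin d)), x⟫| ≤ ‖(ω : EuclideanSpace ℝ (Fin d))‖ * ‖x‖ :=
          abs_real_inner_le_norm _ _
      _ = ‖x‖ := by rw [hω, one_mul]
  set Cbd : ℝ := Real.exp (2*κ) * (((κ*2)*2)*(2*(4*‖v‖)) + 2*(4*‖v‖) + 2*(2*‖v‖)) with hCbd
  have hbound : ∀ (ω : sphere (0 : EuclideanSpace ℝ (Fin d)) 1) (t : ℝ), |F' t ω| ≤ Cbd := by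
    intro ω t
    have hAω : |A ω| ≤ 1 := by simpa [hu] using habs ω u
    have hBω : |B ω| ≤ 1 := by simpa [hn] using habs ω n
    have hCω : |C ω| ≤ ‖v‖ := habs ω v
    have hkb : |k| ≤ ‖v‖ := by
      calc |k| = |⟪v, n⟫| := by rw [hk, real_inner_comm]
        _ ≤ ‖v‖ * ‖n‖ := abs_real_inner_le_norm _ _
        _ = ‖v‖ := by rw [hn, mul_one]
    have hct : |Real.cos t| ≤ 1 := Real.abs_cos_le_one t
    have hst : |Real.sin t| ≤ 1 := Real.abs_sin_le_one t
    have hPb : |P t ω| ≤ 2 := by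
      calc |P t ω| ≤ |Real.cos t * A ω| + |Real.sin t * B ω| := abs_add_le _ _
        _ ≤ 1 * 1 + 1 * 1 := add_le_add (absmul_le8 hct hAω) (absmul_le8 hst hBω)
        _ = 2 := by norm_num
    have hP'b : |P' t ω| ≤ 2 := by
      calc |P' t ω| ≤ |-Real.sin t * A ω| + |Real.cos t * B ω| := abs_add_le _ _
        _ ≤ 1 * 1 + 1 * 1 := add_le_add
            (absmul_le8 (by rwa [abs_neg]) hAω) (absmul_le8 hct hBω)
        _ = 2 := by norm_num
    have hQb : |Q t ω| ≤ 4 * ‖v‖ := by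
      have h1 : |(Real.cos t - 1) * B ω - Real.sin t * A ω| ≤ 3 := by
        calc |(Real.cos t - 1) * B ω - Real.sin t * A ω|
            ≤ |(Real.cos t - 1) * B ω| + |Real.sin t * A ω| := abs_sub _ _
          _ ≤ 2 * 1 + 1 * 1 := add_le_add
              (absmul_le8 (by
                calc |Real.cos t - 1| ≤ |Real.cos t| + 1 := by
                      simpa using abs_sub (Real.cos t) 1
                  _ ≤ 2 := by linarith) hBω) (absmul_le8 hst hAω)
          _ = 3 := by norm_num
      calc |Q t ω| ≤ |C ω| + |((Real.cos t - 1) * B ω - Real.sin t * A ω) * k| := abs_add_le _ _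
        _ ≤ ‖v‖ + 3 * ‖v‖ := add_le_add hCω (absmul_le8 h1 hkb)
        _ = 4 * ‖v‖ := by ring
    have hQ'b : |Q' t ω| ≤ 2 * ‖v‖ := by
      have h1 : |-Real.sin t * B ω - Real.cos t * A ω| ≤ 2 := by
        calc |-Real.sin t * B ω - Real.cos t * A ω|
            ≤ |-Real.sin t * B ω| + |Real.cos t * A ω| := abs_sub _ _
          _ ≤ 1 * 1 + 1 * 1 := add_le_add
              (absmul_le8 (by rwa [abs_neg]) hBω) (absmul_le8 hct hAω)
          _ = 2 := by norm_num
      exact absmul_le8 h1 hkb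
    have hexpb : Real.exp (κ/2 * (P t ω)^2) ≤ Real.exp (2*κ) := by
      apply Real.exp_le_exp.mpr
      have hP2 : (P t ω)^2 ≤ 4 := by
        nlinarith [sq_abs (P t ω), abs_nonneg (P t ω), hPb]
      calc κ/2 * (P t ω)^2 ≤ κ/2 * 4 :=
            mul_le_mul_of_nonneg_left hP2 (by positivity)
        _ = 2*κ := by ring
    have hXb : |(κ * P t ω * P' t ω) * (P t ω * Q t ω) + P' t ω * Q t ω + P t ω * Q' t ω|
        ≤ ((κ*2)*2)*(2*(4*‖v‖)) + 2*(4*‖v‖) + 2*(2*‖v‖) := by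
      have hκa : |κ| ≤ κ := le_of_eq (abs_of_pos hκ)
      calc |(κ * P t ω * P' t ω) * (P t ω * Q t ω) + P' t ω * Q t ω + P t ω * Q' t ω|
          ≤ |(κ * P t ω * P' t ω) * (P t ω * Q t ω) + P' t ω * Q t ω| + |P t ω * Q' t ω| :=
            abs_add_le _ _
        _ ≤ (|(κ * P t ω * P' t ω) * (P t ω * Q t ω)| + |P' t ω * Q t ω|) + |P t ω * Q' t ω| :=
            add_le_add_left (abs_add_le _ _) _
        _ ≤ (((κ*2)*2)*(2*(4*‖v‖)) + 2*(4*‖v‖)) + 2*(2*‖v‖) := by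
            refine add_le_add (add_le_add ?_ ?_) ?_
            · exact absmul_le8 (absmul_le8 (absmul_le8 hκa hPb) hP'b) (absmul_le8 hPb hQb)
            · exact absmul_le8 hP'b hQb
            · exact absmul_le8 hPb hQ'b
        _ = _ := by ring
    calc |F' t ω| = Real.exp (κ/2 * (P t ω)^2) *
          |(κ * P t ω * P' t ω) * (P t ω * Q t ω) + P' t ω * Q t ω + P t ω * Q' t ω| := by
          rw [hF', abs_mul, abs_of_pos (Real.exp_pos _)]
      _ ≤ Cbd := by
          rw [hCbd]
          exact mul_le_mul hexpb hXb (abs_nonneg _) (Real.exp_pos _).le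
  -- invariance of the integral under the rotation family
  set g : sphere (0 : EuclideanSpace ℝ (Fin d)) 1 → ℝ := fun ω =>
    Real.exp (κ/2 * (A ω)^2) * (A ω * C ω) with hg
  have hgc : Continuous g :=
    (Real.continuous_exp.comp (continuous_const.mul (ca.pow 2))).mul (ca.mul cc)
  have hcomp : ∀ (t : ℝ) ω, F t ω = g (sphereRot (rotI d t u n hu hn hun) ω) := by
    intro t ω
    have hco : ((sphereRot (rotI d t u n hu hn hun) ω : EuclideanSpace ℝ (Fin d)))
        = (ω : EuclideanSpace ℝ (Fin d))
          + ((Real.cos t - 1) * ⟪u, (ω : EuclideanSpace ℝ (Fin d))⟫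
              + Real.sin t * ⟪n, (ω : EuclideanSpace ℝ (Fin d))⟫) • u
          + ((Real.cos t - 1) * ⟪n, (ω : EuclideanSpace ℝ (Fin d))⟫
              - Real.sin t * ⟪u, (ω : EuclideanSpace ℝ (Fin d))⟫) • n := rfl
    have huu : ⟪u, u⟫ = 1 := by rw [real_inner_self_eq_norm_sq, hu]; norm_num
    have hnn : ⟪n, n⟫ = 1 := by rw [real_inner_self_eq_norm_sq, hn]; norm_num
    have hnu : ⟪n, u⟫ = 0 := by rw [real_inner_comm]; exact hun
    have hcu : ⟪u, (ω : EuclideanSpace ℝ (Fin d))⟫ = A ω :=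
      real_inner_comm (ω : EuclideanSpace ℝ (Fin d)) u
    have hcn : ⟪n, (ω : EuclideanSpace ℝ (Fin d))⟫ = B ω :=
      real_inner_comm (ω : EuclideanSpace ℝ (Fin d)) n
    have hru : ⟪((sphereRot (rotI d t u n hu hn hun) ω : EuclideanSpace ℝ (Fin d))), u⟫
        = P t ω := by
      rw [hco]
      simp only [inner_add_left, real_inner_smul_left, huu, hnu, hcu, hcn, hP]
      ring
    have hrv : ⟪((sphereRot (rotI d t u n hu hn hun) ω : EuclideanSpace ℝ (Fin d))), v⟫
        = Q t ω := by
      rw [hco]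
      simp only [inner_add_left, real_inner_smul_left, huv, hcu, hcn, hQ, hC, hk]
      ring
    simp only [hF, hg, hA, hC]
    rw [hru, hrv]
  have h0g : ∀ ω, F 0 ω = g ω := by
    intro ω
    simp only [hF, hP, hQ, hg, Real.cos_zero, Real.sin_zero]
    ring_nf
  have hconst : ∀ t, ∫ ω, F t ω ∂σ = ∫ ω, F 0 ω ∂σ := by
    intro t
    calc ∫ ω, F t ω ∂σ = ∫ ω, g (sphereRot (rotI d t u n hu hn hun) ω) ∂σ :=
          integral_congr_ae (Filter.Eventually.of_forall (hcomp t))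
      _ = ∫ ω, g ω ∂σ := integral_sphereRot σ hσ _ g hgc
      _ = ∫ ω, F 0 ω ∂σ := integral_congr_ae
          (Filter.Eventually.of_forall fun ω => (h0g ω).symm)
  have main := (hasDerivAt_integral_of_dominated_loc_of_deriv_le (μ := σ) (F := F) (F' := F')
    (x₀ := 0) (bound := fun _ => Cbd) (Metric.ball_mem_nhds 0 zero_lt_one)
    (Filter.Eventually.of_forall fun t => (contF t).aestronglyMeasurable)
    (contInt σ _ (contF 0))
    ((contF' 0).aestronglyMeasurable)
    (Filter.Eventually.of_forall fun ω t _ => by rw [Real.norm_eq_abs]; exact hbound ω t)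
    (integrable_const Cbd)
    (Filter.Eventually.of_forall fun ω t _ => hder ω t)).2
  have hzero : ∫ ω, F' 0 ω ∂σ = 0 := by
    have hconstf : (fun t => ∫ ω, F t ω ∂σ) = fun _ => ∫ ω, F 0 ω ∂σ := funext hconst
    have h2 : HasDerivAt (fun t => ∫ ω, F t ω ∂σ) 0 0 := by
      rw [hconstf]; exact hasDerivAt_const _ _
    exact main.unique h2
  calc ∫ ω, Real.exp (κ/2 * (A ω)^2) * (κ * (A ω)^2 * B ω * C ω + B ω * C ω - (A ω)^2 * k) ∂σ
      = ∫ ω, F' 0 ω ∂σ := by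
        apply integral_congr_ae
        apply Filter.Eventually.of_forall
        intro ω
        simp only [hF', hP, hP', hQ, hQ', Real.cos_zero, Real.sin_zero]
        ring_nf
    _ = 0 := hzero
end Sphere3

section Sphere4
set_option linter.unusedSectionVars false
set_option maxHeartbeats 1000000
variable {d : ℕ}
variable (σ : Measure (sphere (0 : EuclideanSpace ℝ (Fin d)) 1)) [IsProbabilityMeasure σ]
  (hσ : ∀ e : EuclideanSpace ℝ (Fin d) ≃ₗᵢ[ℝ] EuclideanSpace ℝ (Fin d),
      σ.map (sphereRot e) = σ)
include hσ

/-- trace identity: (d-1) ∫ h b² = ∫ h − ∫ h a² -/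
lemma traceLemma8 (κ : ℝ) (u n : EuclideanSpace ℝ (Fin d))
    (hu : ‖u‖ = 1) (hn : ‖n‖ = 1) (hun : ⟪u, n⟫ = 0) :
    ((d : ℝ) - 1) * (∫ ω, Real.exp (κ/2 * ⟪(ω : EuclideanSpace ℝ (Fin d)), u⟫^2) *
        ⟪(ω : EuclideanSpace ℝ (Fin d)), n⟫^2 ∂σ)
      = (∫ ω, Real.exp (κ/2 * ⟪(ω : EuclideanSpace ℝ (Fin d)), u⟫^2) ∂σ)
        - ∫ ω, Real.exp (κ/2 * ⟪(ω : EuclideanSpace ℝ (Fin d)), u⟫^2) *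
          ⟪(ω : EuclideanSpace ℝ (Fin d)), u⟫^2 ∂σ := by
  have ca : Continuous fun ω : sphere (0 : EuclideanSpace ℝ (Fin d)) 1 =>
      ⟪(ω : EuclideanSpace ℝ (Fin d)), u⟫ := continuous_subtype_val.inner continuous_const
  have ch : Continuous fun ω : sphere (0 : EuclideanSpace ℝ (Fin d)) 1 =>
      Real.exp (κ/2 * ⟪(ω : EuclideanSpace ℝ (Fin d)), u⟫^2) :=
    Real.continuous_exp.comp (continuous_const.mul (ca.pow 2))
  have huu : ⟪u, u⟫ = 1 := by rw [real_inner_self_eq_norm_sq, hu]; norm_num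
  set W : Fin d → EuclideanSpace ℝ (Fin d) := fun i =>
    EuclideanSpace.single i (1 : ℝ) - (u i) • u with hW
  have hiu : ∀ (x : EuclideanSpace ℝ (Fin d)) i, ⟪x, EuclideanSpace.single i (1:ℝ)⟫ = x i := by
    intro x i
    rw [EuclideanSpace.inner_single_right]
    simp
  have hWu : ∀ i, ⟪u, W i⟫ = 0 := by
    intro i
    rw [hW]
    simp only [inner_sub_right, real_inner_smul_right, hiu, huu]
    ring
  have hWω : ∀ (ω : sphere (0 : EuclideanSpace ℝ (Fin d)) 1) i,
      ⟪(ω : EuclideanSpace ℝ (Fin d)), W i⟫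
        = (ω : EuclideanSpace ℝ (Fin d)) i
          - u i * ⟪(ω : EuclideanSpace ℝ (Fin d)), u⟫ := by
    intro ω i
    rw [hW]
    simp only [inner_sub_right, real_inner_smul_right, hiu]
  have inner_sum : ∀ x y : EuclideanSpace ℝ (Fin d), ⟪x, y⟫ = ∑ i, x i * y i := by
    intro x y
    rw [PiLp.inner_apply]
    exact Finset.sum_congr rfl fun i _ => by simp [RCLike.inner_apply, mul_comm]
  have hWW : ∀ i, ⟪W i, W i⟫ = 1 - (u i)^2 := by
    intro i
    rw [hW]
    have h1 : ⟪EuclideanSpace.single i (1:ℝ), EuclideanSpace.single i (1:ℝ)⟫ = 1 := by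
      rw [hiu]; simp [EuclideanSpace.single_apply]
    have h2 : ⟪EuclideanSpace.single i (1:ℝ), (u i) • u⟫ = u i * u i := by
      rw [real_inner_smul_right, EuclideanSpace.inner_single_left]; simp
    have h2' : ⟪(u i) • u, EuclideanSpace.single i (1:ℝ)⟫ = u i * u i := by
      rw [real_inner_smul_left, hiu]
    have h3 : ⟪(u i) • u, (u i) • u⟫ = u i * u i := by
      rw [real_inner_smul_left, real_inner_smul_right, huu]; ring
    simp only [inner_sub_left, inner_sub_right, h1, h2, h2', h3]
    ring
  -- pointwise sum identity
  have hsumpt : ∀ ω : sphere (0 : EuclideanSpace ℝ (Fin d)) 1,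
      ∑ i, ⟪(ω : EuclideanSpace ℝ (Fin d)), W i⟫^2
        = 1 - ⟪(ω : EuclideanSpace ℝ (Fin d)), u⟫^2 := by
    intro ω
    have hωn : ⟪(ω : EuclideanSpace ℝ (Fin d)), (ω : EuclideanSpace ℝ (Fin d))⟫ = 1 := by
      have hω : ‖(ω : EuclideanSpace ℝ (Fin d))‖ = 1 := by
        have := ω.2; rwa [mem_sphere_zero_iff_norm] at this
      rw [real_inner_self_eq_norm_sq, hω]; norm_num
    have hsum1 : ∑ i, (ω : EuclideanSpace ℝ (Fin d)) i * (ω : EuclideanSpace ℝ (Fin d)) i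
        = 1 := by rw [← inner_sum]; exact hωn
    have hsum2 : ∑ i, (ω : EuclideanSpace ℝ (Fin d)) i * u i
        = ⟪(ω : EuclideanSpace ℝ (Fin d)), u⟫ := (inner_sum _ _).symm
    have hsum3 : ∑ i, u i * u i = 1 := by rw [← inner_sum]; exact huu
    set a : ℝ := ⟪(ω : EuclideanSpace ℝ (Fin d)), u⟫ with ha
    calc ∑ i, ⟪(ω : EuclideanSpace ℝ (Fin d)), W i⟫^2
        = ∑ i, ((ω : EuclideanSpace ℝ (Fin d)) i * (ω : EuclideanSpace ℝ (Fin d)) i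
            - (2*a) * ((ω : EuclideanSpace ℝ (Fin d)) i * u i) + (a^2) * (u i * u i)) := by
          apply Finset.sum_congr rfl
          intro i _
          rw [hWω ω i]
          ring
      _ = 1 - 2*a*a + a^2 * 1 := by
          rw [Finset.sum_add_distrib, Finset.sum_sub_distrib, ← Finset.mul_sum, ← Finset.mul_sum,
            hsum1, hsum2, hsum3]
      _ = 1 - a^2 := by ring
  -- swap each
  have hswap : ∀ i, (∫ ω, Real.exp (κ/2 * ⟪(ω : EuclideanSpace ℝ (Fin d)), u⟫^2) *
        ⟪(ω : EuclideanSpace ℝ (Fin d)), W i⟫^2 ∂σ)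
      = ⟪W i, W i⟫ * ∫ ω, Real.exp (κ/2 * ⟪(ω : EuclideanSpace ℝ (Fin d)), u⟫^2) *
        ⟪(ω : EuclideanSpace ℝ (Fin d)), n⟫^2 ∂σ := by
    intro i
    by_cases hWz : W i = 0
    · rw [hWz]
      simp [inner_zero_right]
    · have hWn : ‖W i‖ ≠ 0 := norm_ne_zero_iff.mpr hWz
      set m₁ : EuclideanSpace ℝ (Fin d) := ‖W i‖⁻¹ • W i with hm₁
      have hm₁n : ‖m₁‖ = 1 := by
        rw [hm₁, norm_smul, norm_inv, norm_norm, inv_mul_cancel₀ hWn]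
      have hum₁ : ⟪u, m₁⟫ = 0 := by
        rw [hm₁, real_inner_smul_right, hWu]; ring
      have hg : Continuous fun p : ℝ × ℝ =>
          Real.exp (κ/2 * p.1^2) * (‖W i‖ * p.2)^2 := by continuity
      have hs := swapIntegral8 σ hσ u m₁ n hm₁n hn hum₁ hun
        (fun x y => Real.exp (κ/2 * x^2) * (‖W i‖ * y)^2) hg
      have hl : ∀ ω : sphere (0 : EuclideanSpace ℝ (Fin d)) 1,
          ⟪(ω : EuclideanSpace ℝ (Fin d)), W i⟫
            = ‖W i‖ * ⟪(ω : EuclideanSpace ℝ (Fin d)), m₁⟫ := by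
        intro ω
        rw [hm₁, real_inner_smul_right]
        field_simp
      calc (∫ ω, Real.exp (κ/2 * ⟪(ω : EuclideanSpace ℝ (Fin d)), u⟫^2) *
            ⟪(ω : EuclideanSpace ℝ (Fin d)), W i⟫^2 ∂σ)
          = ∫ ω, Real.exp (κ/2 * ⟪(ω : EuclideanSpace ℝ (Fin d)), u⟫^2) *
              (‖W i‖ * ⟪(ω : EuclideanSpace ℝ (Fin d)), m₁⟫)^2 ∂σ := by
            apply integral_congr_ae
            apply Filter.Eventually.of_forall
            intro ω
            simp only [hl]
        _ = ∫ ω, Real.exp (κ/2 * ⟪(ω : EuclideanSpace ℝ (Fin d)), u⟫^2) *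
              (‖W i‖ * ⟪(ω : EuclideanSpace ℝ (Fin d)), n⟫)^2 ∂σ := hs
        _ = ∫ ω, ‖W i‖^2 * (Real.exp (κ/2 * ⟪(ω : EuclideanSpace ℝ (Fin d)), u⟫^2) *
              ⟪(ω : EuclideanSpace ℝ (Fin d)), n⟫^2) ∂σ := by
            apply integral_congr_ae
            apply Filter.Eventually.of_forall
            intro ω
            ring
        _ = ⟪W i, W i⟫ * ∫ ω, Real.exp (κ/2 * ⟪(ω : EuclideanSpace ℝ (Fin d)), u⟫^2) *
              ⟪(ω : EuclideanSpace ℝ (Fin d)), n⟫^2 ∂σ := by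
            rw [integral_const_mul, real_inner_self_eq_norm_sq]
  -- sum up
  have hWWsum : ∑ i, ⟪W i, W i⟫ = (d : ℝ) - 1 := by
    have hsum3 : ∑ i, u i * u i = 1 := by rw [← inner_sum]; exact huu
    calc ∑ i, ⟪W i, W i⟫ = ∑ i, (1 - (u i)^2) := by
          exact Finset.sum_congr rfl fun i _ => hWW i
      _ = (d : ℝ) - 1 := by
          rw [Finset.sum_sub_distrib]
          simp only [Finset.sum_const, Finset.card_univ, Fintype.card_fin, nsmul_eq_mul, mul_one]
          have h5 : ∑ i, (u i)^2 = 1 := by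
            rw [← hsum3]
            exact Finset.sum_congr rfl fun i _ => by ring
          rw [h5]
  have hintW : ∀ i, Integrable (fun ω : sphere (0 : EuclideanSpace ℝ (Fin d)) 1 =>
      Real.exp (κ/2 * ⟪(ω : EuclideanSpace ℝ (Fin d)), u⟫^2) *
        ⟪(ω : EuclideanSpace ℝ (Fin d)), W i⟫^2) σ := by
    intro i
    exact contInt σ _ (ch.mul ((continuous_subtype_val.inner continuous_const).pow 2))
  calc ((d : ℝ) - 1) * (∫ ω, Real.exp (κ/2 * ⟪(ω : EuclideanSpace ℝ (Fin d)), u⟫^2) *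
        ⟪(ω : EuclideanSpace ℝ (Fin d)), n⟫^2 ∂σ)
      = ∑ i, ⟪W i, W i⟫ * ∫ ω, Real.exp (κ/2 * ⟪(ω : EuclideanSpace ℝ (Fin d)), u⟫^2) *
          ⟪(ω : EuclideanSpace ℝ (Fin d)), n⟫^2 ∂σ := by
        rw [← Finset.sum_mul, hWWsum]
    _ = ∑ i, ∫ ω, Real.exp (κ/2 * ⟪(ω : EuclideanSpace ℝ (Fin d)), u⟫^2) *
          ⟪(ω : EuclideanSpace ℝ (Fin d)), W i⟫^2 ∂σ := by
        exact Finset.sum_congr rfl fun i _ => (hswap i).symm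
    _ = ∫ ω, ∑ i, Real.exp (κ/2 * ⟪(ω : EuclideanSpace ℝ (Fin d)), u⟫^2) *
          ⟪(ω : EuclideanSpace ℝ (Fin d)), W i⟫^2 ∂σ := by
        exact (integral_finset_sum _ fun i _ => hintW i).symm
    _ = ∫ ω, (Real.exp (κ/2 * ⟪(ω : EuclideanSpace ℝ (Fin d)), u⟫^2)
          - Real.exp (κ/2 * ⟪(ω : EuclideanSpace ℝ (Fin d)), u⟫^2) *
            ⟪(ω : EuclideanSpace ℝ (Fin d)), u⟫^2) ∂σ := by
        apply integral_congr_ae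
        apply Filter.Eventually.of_forall
        intro ω
        beta_reduce
        rw [← Finset.mul_sum, hsumpt ω]
        ring
    _ = _ := by
        apply integral_sub (contInt σ _ ch) (contInt σ _ (ch.mul (ca.pow 2)))
end Sphere4

section Sphere5
set_option linter.unusedSectionVars false
set_option maxHeartbeats 1000000
variable {d : ℕ}
variable (σ : Measure (sphere (0 : EuclideanSpace ℝ (Fin d)) 1)) [IsProbabilityMeasure σ]
  (hσ : ∀ e : EuclideanSpace ℝ (Fin d) ≃ₗᵢ[ℝ] EuclideanSpace ℝ (Fin d),
      σ.map (sphereRot e) = σ)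
include hσ

lemma keyLemma8 (κ : ℝ) (hκ : 0 < κ) (u n v : EuclideanSpace ℝ (Fin d))
    (hu : ‖u‖ = 1) (hn : ‖n‖ = 1) (hun : ⟪u, n⟫ = 0) (huv : ⟪u, v⟫ = 0) :
    κ * ∫ ω, Real.exp (κ/2 * ⟪(ω : EuclideanSpace ℝ (Fin d)), u⟫^2) *
        (⟪(ω : EuclideanSpace ℝ (Fin d)), u⟫^2 * ⟪(ω : EuclideanSpace ℝ (Fin d)), n⟫ *
          ⟪(ω : EuclideanSpace ℝ (Fin d)), v⟫) ∂σ
      = ⟪n, v⟫ * ((∫ ω, Real.exp (κ/2 * ⟪(ω : EuclideanSpace ℝ (Fin d)), u⟫^2) *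
            ⟪(ω : EuclideanSpace ℝ (Fin d)), u⟫^2 ∂σ)
          - ∫ ω, Real.exp (κ/2 * ⟪(ω : EuclideanSpace ℝ (Fin d)), u⟫^2) *
            ⟪(ω : EuclideanSpace ℝ (Fin d)), n⟫^2 ∂σ) := by
  have ca : Continuous fun ω : sphere (0 : EuclideanSpace ℝ (Fin d)) 1 =>
      ⟪(ω : EuclideanSpace ℝ (Fin d)), u⟫ := continuous_subtype_val.inner continuous_const
  have cb : Continuous fun ω : sphere (0 : EuclideanSpace ℝ (Fin d)) 1 =>
      ⟪(ω : EuclideanSpace ℝ (Fin d)), n⟫ := continuous_subtype_val.inner continuous_const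
  have cc : Continuous fun ω : sphere (0 : EuclideanSpace ℝ (Fin d)) 1 =>
      ⟪(ω : EuclideanSpace ℝ (Fin d)), v⟫ := continuous_subtype_val.inner continuous_const
  have ch : Continuous fun ω : sphere (0 : EuclideanSpace ℝ (Fin d)) 1 =>
      Real.exp (κ/2 * ⟪(ω : EuclideanSpace ℝ (Fin d)), u⟫^2) :=
    Real.continuous_exp.comp (continuous_const.mul (ca.pow 2))
  have intX1 : Integrable (fun ω : sphere (0 : EuclideanSpace ℝ (Fin d)) 1 =>
      Real.exp (κ/2 * ⟪(ω : EuclideanSpace ℝ (Fin d)), u⟫^2) *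
        (⟪(ω : EuclideanSpace ℝ (Fin d)), u⟫^2 * ⟪(ω : EuclideanSpace ℝ (Fin d)), n⟫ *
          ⟪(ω : EuclideanSpace ℝ (Fin d)), v⟫)) σ :=
    contInt σ _ (ch.mul (((ca.pow 2).mul cb).mul cc))
  have intX2 : Integrable (fun ω : sphere (0 : EuclideanSpace ℝ (Fin d)) 1 =>
      Real.exp (κ/2 * ⟪(ω : EuclideanSpace ℝ (Fin d)), u⟫^2) *
        (⟪(ω : EuclideanSpace ℝ (Fin d)), n⟫ * ⟪(ω : EuclideanSpace ℝ (Fin d)), v⟫)) σ :=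
    contInt σ _ (ch.mul (cb.mul cc))
  have intX3 : Integrable (fun ω : sphere (0 : EuclideanSpace ℝ (Fin d)) 1 =>
      Real.exp (κ/2 * ⟪(ω : EuclideanSpace ℝ (Fin d)), u⟫^2) *
        ⟪(ω : EuclideanSpace ℝ (Fin d)), u⟫^2) σ :=
    contInt σ _ (ch.mul (ca.pow 2))
  have hDI := derivIdentity8 σ hσ κ hκ u n v hu hn hun huv
  -- split the derivative identity
  have hsplit : κ * (∫ ω, Real.exp (κ/2 * ⟪(ω : EuclideanSpace ℝ (Fin d)), u⟫^2) *
        (⟪(ω : EuclideanSpace ℝ (Fin d)), u⟫^2 * ⟪(ω : EuclideanSpace ℝ (Fin d)), n⟫ *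
          ⟪(ω : EuclideanSpace ℝ (Fin d)), v⟫) ∂σ)
      + (∫ ω, Real.exp (κ/2 * ⟪(ω : EuclideanSpace ℝ (Fin d)), u⟫^2) *
          (⟪(ω : EuclideanSpace ℝ (Fin d)), n⟫ * ⟪(ω : EuclideanSpace ℝ (Fin d)), v⟫) ∂σ)
      - ⟪n, v⟫ * (∫ ω, Real.exp (κ/2 * ⟪(ω : EuclideanSpace ℝ (Fin d)), u⟫^2) *
          ⟪(ω : EuclideanSpace ℝ (Fin d)), u⟫^2 ∂σ) = 0 := by
    have eA : ∫ ω, ((κ * (Real.exp (κ/2 * ⟪(ω : EuclideanSpace ℝ (Fin d)), u⟫^2) *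
          (⟪(ω : EuclideanSpace ℝ (Fin d)), u⟫^2 * ⟪(ω : EuclideanSpace ℝ (Fin d)), n⟫ *
            ⟪(ω : EuclideanSpace ℝ (Fin d)), v⟫))
        + Real.exp (κ/2 * ⟪(ω : EuclideanSpace ℝ (Fin d)), u⟫^2) *
          (⟪(ω : EuclideanSpace ℝ (Fin d)), n⟫ * ⟪(ω : EuclideanSpace ℝ (Fin d)), v⟫))
        - ⟪n, v⟫ * (Real.exp (κ/2 * ⟪(ω : EuclideanSpace ℝ (Fin d)), u⟫^2) *
          ⟪(ω : EuclideanSpace ℝ (Fin d)), u⟫^2)) ∂σ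
        = (κ * (∫ ω, Real.exp (κ/2 * ⟪(ω : EuclideanSpace ℝ (Fin d)), u⟫^2) *
            (⟪(ω : EuclideanSpace ℝ (Fin d)), u⟫^2 * ⟪(ω : EuclideanSpace ℝ (Fin d)), n⟫ *
              ⟪(ω : EuclideanSpace ℝ (Fin d)), v⟫) ∂σ)
          + ∫ ω, Real.exp (κ/2 * ⟪(ω : EuclideanSpace ℝ (Fin d)), u⟫^2) *
            (⟪(ω : EuclideanSpace ℝ (Fin d)), n⟫ * ⟪(ω : EuclideanSpace ℝ (Fin d)), v⟫) ∂σ)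
          - ⟪n, v⟫ * ∫ ω, Real.exp (κ/2 * ⟪(ω : EuclideanSpace ℝ (Fin d)), u⟫^2) *
            ⟪(ω : EuclideanSpace ℝ (Fin d)), u⟫^2 ∂σ := by
      have iX1 : Integrable (fun ω : sphere (0 : EuclideanSpace ℝ (Fin d)) 1 =>
          κ * (Real.exp (κ/2 * ⟪(ω : EuclideanSpace ℝ (Fin d)), u⟫^2) *
            (⟪(ω : EuclideanSpace ℝ (Fin d)), u⟫^2 * ⟪(ω : EuclideanSpace ℝ (Fin d)), n⟫ *
              ⟪(ω : EuclideanSpace ℝ (Fin d)), v⟫))) σ := intX1.const_mul κ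
      have i12 : Integrable (fun ω : sphere (0 : EuclideanSpace ℝ (Fin d)) 1 =>
          κ * (Real.exp (κ/2 * ⟪(ω : EuclideanSpace ℝ (Fin d)), u⟫^2) *
            (⟪(ω : EuclideanSpace ℝ (Fin d)), u⟫^2 * ⟪(ω : EuclideanSpace ℝ (Fin d)), n⟫ *
              ⟪(ω : EuclideanSpace ℝ (Fin d)), v⟫))
          + Real.exp (κ/2 * ⟪(ω : EuclideanSpace ℝ (Fin d)), u⟫^2) *
            (⟪(ω : EuclideanSpace ℝ (Fin d)), n⟫ * ⟪(ω : EuclideanSpace ℝ (Fin d)), v⟫)) σ :=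
        iX1.add intX2
      have i3 : Integrable (fun ω : sphere (0 : EuclideanSpace ℝ (Fin d)) 1 =>
          ⟪n, v⟫ * (Real.exp (κ/2 * ⟪(ω : EuclideanSpace ℝ (Fin d)), u⟫^2) *
            ⟪(ω : EuclideanSpace ℝ (Fin d)), u⟫^2)) σ := intX3.const_mul _
      rw [integral_sub i12 i3, integral_add iX1 intX2, integral_const_mul, integral_const_mul]
    rw [← eA, ← hDI]
    apply integral_congr_ae
    apply Filter.Eventually.of_forall
    intro ω
    beta_reduce
    ring
  -- B-part
  have hB : (∫ ω, Real.exp (κ/2 * ⟪(ω : EuclideanSpace ℝ (Fin d)), u⟫^2) *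
        (⟪(ω : EuclideanSpace ℝ (Fin d)), n⟫ * ⟪(ω : EuclideanSpace ℝ (Fin d)), v⟫) ∂σ)
      = ⟪n, v⟫ * ∫ ω, Real.exp (κ/2 * ⟪(ω : EuclideanSpace ℝ (Fin d)), u⟫^2) *
          ⟪(ω : EuclideanSpace ℝ (Fin d)), n⟫^2 ∂σ := by
    set v' : EuclideanSpace ℝ (Fin d) := v - ⟪n, v⟫ • n with hv'
    have hnn : ⟪n, n⟫ = 1 := by rw [real_inner_self_eq_norm_sq, hn]; norm_num
    have huv' : ⟪u, v'⟫ = 0 := by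
      rw [hv', inner_sub_right, real_inner_smul_right, hun, huv]; ring
    have hnv' : ⟪n, v'⟫ = 0 := by
      rw [hv', inner_sub_right, real_inner_smul_right, hnn]; ring
    have hov := odd_vanish σ hσ u n v' huv' hnv'
      (fun x y => Real.exp (κ/2 * x^2) * y) (by continuity)
    have intB2 : Integrable (fun ω : sphere (0 : EuclideanSpace ℝ (Fin d)) 1 =>
        Real.exp (κ/2 * ⟪(ω : EuclideanSpace ℝ (Fin d)), u⟫^2) *
          ⟪(ω : EuclideanSpace ℝ (Fin d)), n⟫^2) σ :=
      contInt σ _ (ch.mul (cb.pow 2))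
    have intB3 : Integrable (fun ω : sphere (0 : EuclideanSpace ℝ (Fin d)) 1 =>
        Real.exp (κ/2 * ⟪(ω : EuclideanSpace ℝ (Fin d)), u⟫^2) *
          ⟪(ω : EuclideanSpace ℝ (Fin d)), n⟫ * ⟪(ω : EuclideanSpace ℝ (Fin d)), v'⟫) σ :=
      contInt σ _ ((ch.mul cb).mul (continuous_subtype_val.inner continuous_const))
    have hpt : ∀ ω : sphere (0 : EuclideanSpace ℝ (Fin d)) 1,
        Real.exp (κ/2 * ⟪(ω : EuclideanSpace ℝ (Fin d)), u⟫^2) *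
          (⟪(ω : EuclideanSpace ℝ (Fin d)), n⟫ * ⟪(ω : EuclideanSpace ℝ (Fin d)), v⟫)
        = ⟪n, v⟫ * (Real.exp (κ/2 * ⟪(ω : EuclideanSpace ℝ (Fin d)), u⟫^2) *
            ⟪(ω : EuclideanSpace ℝ (Fin d)), n⟫^2)
          + Real.exp (κ/2 * ⟪(ω : EuclideanSpace ℝ (Fin d)), u⟫^2) *
            ⟪(ω : EuclideanSpace ℝ (Fin d)), n⟫ * ⟪(ω : EuclideanSpace ℝ (Fin d)), v'⟫ := by
      intro ω
      have : ⟪(ω : EuclideanSpace ℝ (Fin d)), v'⟫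
          = ⟪(ω : EuclideanSpace ℝ (Fin d)), v⟫
            - ⟪n, v⟫ * ⟪(ω : EuclideanSpace ℝ (Fin d)), n⟫ := by
        rw [hv', inner_sub_right, real_inner_smul_right]
      rw [this]
      ring
    calc (∫ ω, Real.exp (κ/2 * ⟪(ω : EuclideanSpace ℝ (Fin d)), u⟫^2) *
          (⟪(ω : EuclideanSpace ℝ (Fin d)), n⟫ * ⟪(ω : EuclideanSpace ℝ (Fin d)), v⟫) ∂σ)
        = ∫ ω, (⟪n, v⟫ * (Real.exp (κ/2 * ⟪(ω : EuclideanSpace ℝ (Fin d)), u⟫^2) *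
            ⟪(ω : EuclideanSpace ℝ (Fin d)), n⟫^2)
          + Real.exp (κ/2 * ⟪(ω : EuclideanSpace ℝ (Fin d)), u⟫^2) *
            ⟪(ω : EuclideanSpace ℝ (Fin d)), n⟫ * ⟪(ω : EuclideanSpace ℝ (Fin d)), v'⟫) ∂σ :=
          integral_congr_ae (Filter.Eventually.of_forall hpt)
      _ = ⟪n, v⟫ * (∫ ω, Real.exp (κ/2 * ⟪(ω : EuclideanSpace ℝ (Fin d)), u⟫^2) *
            ⟪(ω : EuclideanSpace ℝ (Fin d)), n⟫^2 ∂σ)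
          + ∫ ω, Real.exp (κ/2 * ⟪(ω : EuclideanSpace ℝ (Fin d)), u⟫^2) *
            ⟪(ω : EuclideanSpace ℝ (Fin d)), n⟫ * ⟪(ω : EuclideanSpace ℝ (Fin d)), v'⟫ ∂σ := by
          rw [integral_add (intB2.const_mul _) intB3, integral_const_mul]
      _ = ⟪n, v⟫ * ∫ ω, Real.exp (κ/2 * ⟪(ω : EuclideanSpace ℝ (Fin d)), u⟫^2) *
            ⟪(ω : EuclideanSpace ℝ (Fin d)), n⟫^2 ∂σ := by
          rw [hov, add_zero]
  rw [hB] at hsplit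
  linarith
end Sphere5

set_option maxHeartbeats 1000000 in
/-- for `f̂₁(ω) = M_{u₀}(ω)(ρ̂ + (ω·u₀)(ω·û))` with `û ⊥ u₀`, one has
`P_{u₀⊥}(Q_{f̂₁} u₀) = ((λ∥ − λ⊥)/κ) û`, where `Qu = Q_{f̂₁} u₀` componentwise,
`λ∥ = ∫ M_{u₀}(ω·u₀)² dσ − 1/d` and `λ⊥ = −λ∥/(d−1)`. -/
theorem stmt8 (d : ℕ) (hd : 2 ≤ d)
    (σ : Measure (sphere (0 : EuclideanSpace ℝ (Fin d)) 1))
    [IsProbabilityMeasure σ]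
    (hσ : ∀ e : EuclideanSpace ℝ (Fin d) ≃ₗᵢ[ℝ] EuclideanSpace ℝ (Fin d),
      σ.map (sphereRot e) = σ)
    (κ : ℝ) (hκ : 0 < κ)
    (u₀ : sphere (0 : EuclideanSpace ℝ (Fin d)) 1)
    (ρhat : ℝ) (uhat : EuclideanSpace ℝ (Fin d))
    (huhat : ⟪uhat, (u₀ : EuclideanSpace ℝ (Fin d))⟫ = 0)
    (Z : ℝ)
    (hZ : Z = ∫ ω, Real.exp (κ / 2 *
        ⟪(ω : EuclideanSpace ℝ (Fin d)), (u₀ : EuclideanSpace ℝ (Fin d))⟫ ^ 2) ∂σ)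
    (M : sphere (0 : EuclideanSpace ℝ (Fin d)) 1 → ℝ)
    (hM : ∀ ω, M ω = Real.exp (κ / 2 *
        ⟪(ω : EuclideanSpace ℝ (Fin d)), (u₀ : EuclideanSpace ℝ (Fin d))⟫ ^ 2) / Z)
    (f₁ : sphere (0 : EuclideanSpace ℝ (Fin d)) 1 → ℝ)
    (hf₁ : ∀ ω, f₁ ω = M ω * (ρhat +
        ⟪(ω : EuclideanSpace ℝ (Fin d)), (u₀ : EuclideanSpace ℝ (Fin d))⟫ *
        ⟪(ω : EuclideanSpace ℝ (Fin d)), uhat⟫))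
    (Qu : Fin d → ℝ)
    (hQu : ∀ i, Qu i = ∫ ω, f₁ ω *
        (⟪(ω : EuclideanSpace ℝ (Fin d)), (u₀ : EuclideanSpace ℝ (Fin d))⟫ *
            (ω : EuclideanSpace ℝ (Fin d)) i -
          (u₀ : EuclideanSpace ℝ (Fin d)) i / (d : ℝ)) ∂σ)
    (lampar lamperp : ℝ)
    (hlampar : lampar = (∫ ω, M ω *
        ⟪(ω : EuclideanSpace ℝ (Fin d)), (u₀ : EuclideanSpace ℝ (Fin d))⟫ ^ 2 ∂σ) - 1 / (d : ℝ))
    (hlamperp : lamperp = -(lampar / ((d : ℝ) - 1))) :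
    ∀ i, Qu i - (∑ j, Qu j * (u₀ : EuclideanSpace ℝ (Fin d)) j) * (u₀ : EuclideanSpace ℝ (Fin d)) i
      = ((lampar - lamperp) / κ) * uhat i := by
  set u : EuclideanSpace ℝ (Fin d) := (u₀ : EuclideanSpace ℝ (Fin d)) with hudef
  have hu : ‖u‖ = 1 := by
    have := u₀.2; rwa [mem_sphere_zero_iff_norm] at this
  have huu : ⟪u, u⟫ = 1 := by rw [real_inner_self_eq_norm_sq, hu]; norm_num
  have huuh : ⟪u, uhat⟫ = 0 := by rw [real_inner_comm]; exact huhat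
  have ca : Continuous fun ω : sphere (0 : EuclideanSpace ℝ (Fin d)) 1 =>
      ⟪(ω : EuclideanSpace ℝ (Fin d)), u⟫ := continuous_subtype_val.inner continuous_const
  have cuh : Continuous fun ω : sphere (0 : EuclideanSpace ℝ (Fin d)) 1 =>
      ⟪(ω : EuclideanSpace ℝ (Fin d)), uhat⟫ := continuous_subtype_val.inner continuous_const
  have ch : Continuous fun ω : sphere (0 : EuclideanSpace ℝ (Fin d)) 1 =>
      Real.exp (κ / 2 * ⟪(ω : EuclideanSpace ℝ (Fin d)), u⟫ ^ 2) :=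
    Real.continuous_exp.comp (continuous_const.mul (ca.pow 2))
  have hZ1 : 1 ≤ Z := by
    rw [hZ]
    calc (1:ℝ) = ∫ _ω, (1 : ℝ) ∂σ := by simp
      _ ≤ _ := by
        apply integral_mono (integrable_const 1) (contInt σ _ ch)
        intro ω
        exact Real.one_le_exp (by positivity)
  have hZpos : (0:ℝ) < Z := lt_of_lt_of_le one_pos hZ1
  have hZne : Z ≠ 0 := ne_of_gt hZpos
  have hd2 : (2:ℝ) ≤ (d:ℝ) := by exact_mod_cast hd
  have hdne : ((d:ℝ)) ≠ 0 := by linarith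
  have hd1ne : ((d:ℝ) - 1) ≠ 0 := by linarith
  have hκne : κ ≠ 0 := ne_of_gt hκ
  have cM : Continuous M := by
    have : M = fun ω : sphere (0 : EuclideanSpace ℝ (Fin d)) 1 =>
        Real.exp (κ / 2 * ⟪(ω : EuclideanSpace ℝ (Fin d)), u⟫ ^ 2) / Z := funext hM
    rw [this]; exact ch.div_const Z
  have cf₁ : Continuous f₁ := by
    have : f₁ = fun ω => M ω * (ρhat + ⟪(ω : EuclideanSpace ℝ (Fin d)), u⟫ *
        ⟪(ω : EuclideanSpace ℝ (Fin d)), uhat⟫) := funext hf₁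
    rw [this]; exact cM.mul (continuous_const.add (ca.mul cuh))
  have inner_sum : ∀ x y : EuclideanSpace ℝ (Fin d), ⟪x, y⟫ = ∑ j, x j * y j := by
    intro x y
    rw [PiLp.inner_apply]
    exact Finset.sum_congr rfl fun j _ => by simp [RCLike.inner_apply, mul_comm]
  have hiu : ∀ (x : EuclideanSpace ℝ (Fin d)) (i : Fin d),
      ⟪x, EuclideanSpace.single i (1:ℝ)⟫ = x i := by
    intro x i
    rw [EuclideanSpace.inner_single_right]
    simp
  have ccoord : ∀ i, Continuous fun ω : sphere (0 : EuclideanSpace ℝ (Fin d)) 1 =>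
      (ω : EuclideanSpace ℝ (Fin d)) i := by
    intro i
    have : (fun ω : sphere (0 : EuclideanSpace ℝ (Fin d)) 1 =>
        (ω : EuclideanSpace ℝ (Fin d)) i)
        = fun ω : sphere (0 : EuclideanSpace ℝ (Fin d)) 1 =>
          ⟪(ω : EuclideanSpace ℝ (Fin d)), EuclideanSpace.single i (1:ℝ)⟫ :=
      funext fun ω => (hiu _ i).symm
    rw [this]
    exact continuous_subtype_val.inner continuous_const
  have hI2M : (∫ ω, M ω * ⟪(ω : EuclideanSpace ℝ (Fin d)), u⟫ ^ 2 ∂σ)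
      = (∫ ω, Real.exp (κ / 2 * ⟪(ω : EuclideanSpace ℝ (Fin d)), u⟫ ^ 2) *
          ⟪(ω : EuclideanSpace ℝ (Fin d)), u⟫ ^ 2 ∂σ) / Z := by
    rw [← integral_div]
    apply integral_congr_ae
    apply Filter.Eventually.of_forall
    intro ω
    beta_reduce
    rw [hM ω]
    ring
  -- the key computation for any w ⊥ u
  have key : ∀ w : EuclideanSpace ℝ (Fin d), ⟪u, w⟫ = 0 →
      ∫ ω, f₁ ω * (⟪(ω : EuclideanSpace ℝ (Fin d)), u⟫ *
          ⟪(ω : EuclideanSpace ℝ (Fin d)), w⟫) ∂σ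
        = ((lampar - lamperp) / κ) * ⟪uhat, w⟫ := by
    intro w hw
    have cw : Continuous fun ω : sphere (0 : EuclideanSpace ℝ (Fin d)) 1 =>
        ⟪(ω : EuclideanSpace ℝ (Fin d)), w⟫ := continuous_subtype_val.inner continuous_const
    have i1 : Integrable (fun ω : sphere (0 : EuclideanSpace ℝ (Fin d)) 1 =>
        (ρhat / Z) * (Real.exp (κ / 2 * ⟪(ω : EuclideanSpace ℝ (Fin d)), u⟫ ^ 2) *
          ⟪(ω : EuclideanSpace ℝ (Fin d)), u⟫ * ⟪(ω : EuclideanSpace ℝ (Fin d)), w⟫)) σ :=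
      (contInt σ _ ((ch.mul ca).mul cw)).const_mul _
    have i2 : Integrable (fun ω : sphere (0 : EuclideanSpace ℝ (Fin d)) 1 =>
        (1 / Z) * (Real.exp (κ / 2 * ⟪(ω : EuclideanSpace ℝ (Fin d)), u⟫ ^ 2) *
          (⟪(ω : EuclideanSpace ℝ (Fin d)), u⟫ ^ 2 * ⟪(ω : EuclideanSpace ℝ (Fin d)), uhat⟫ *
            ⟪(ω : EuclideanSpace ℝ (Fin d)), w⟫))) σ :=
      (contInt σ _ (ch.mul (((ca.pow 2).mul cuh).mul cw))).const_mul _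
    have hsplit : ∫ ω, f₁ ω * (⟪(ω : EuclideanSpace ℝ (Fin d)), u⟫ *
          ⟪(ω : EuclideanSpace ℝ (Fin d)), w⟫) ∂σ
        = (ρhat / Z) * (∫ ω, Real.exp (κ / 2 * ⟪(ω : EuclideanSpace ℝ (Fin d)), u⟫ ^ 2) *
            ⟪(ω : EuclideanSpace ℝ (Fin d)), u⟫ * ⟪(ω : EuclideanSpace ℝ (Fin d)), w⟫ ∂σ)
          + (1 / Z) * ∫ ω, Real.exp (κ / 2 * ⟪(ω : EuclideanSpace ℝ (Fin d)), u⟫ ^ 2) *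
            (⟪(ω : EuclideanSpace ℝ (Fin d)), u⟫ ^ 2 * ⟪(ω : EuclideanSpace ℝ (Fin d)), uhat⟫ *
              ⟪(ω : EuclideanSpace ℝ (Fin d)), w⟫) ∂σ := by
      rw [← integral_const_mul (ρhat / Z), ← integral_const_mul ((1:ℝ) / Z),
        ← integral_add i1 i2]
      apply integral_congr_ae
      apply Filter.Eventually.of_forall
      intro ω
      beta_reduce
      rw [hf₁ ω, hM ω]
      ring
    have hodd : (∫ ω, Real.exp (κ / 2 * ⟪(ω : EuclideanSpace ℝ (Fin d)), u⟫ ^ 2) *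
        ⟪(ω : EuclideanSpace ℝ (Fin d)), u⟫ * ⟪(ω : EuclideanSpace ℝ (Fin d)), w⟫ ∂σ) = 0 := by
      have h := odd_vanish σ hσ u u w hw hw
        (fun x y => Real.exp (κ / 2 * x ^ 2) * x) (by continuity)
      simpa using h
    by_cases huz : uhat = 0
    · rw [hsplit, hodd, mul_zero, zero_add]
      have : (∫ ω, Real.exp (κ / 2 * ⟪(ω : EuclideanSpace ℝ (Fin d)), u⟫ ^ 2) *
          (⟪(ω : EuclideanSpace ℝ (Fin d)), u⟫ ^ 2 * ⟪(ω : EuclideanSpace ℝ (Fin d)), uhat⟫ *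
            ⟪(ω : EuclideanSpace ℝ (Fin d)), w⟫) ∂σ) = 0 := by
        rw [huz]
        simp [inner_zero_right]
      rw [this, huz]
      simp [inner_zero_left]
    · have hnorm_ne : ‖uhat‖ ≠ 0 := norm_ne_zero_iff.mpr huz
      set n : EuclideanSpace ℝ (Fin d) := ‖uhat‖⁻¹ • uhat with hndef
      have hn : ‖n‖ = 1 := by
        rw [hndef, norm_smul, norm_inv, norm_norm, inv_mul_cancel₀ hnorm_ne]
      have hun : ⟪u, n⟫ = 0 := by
        rw [hndef, real_inner_smul_right, huuh]; ring
      have huhn : ∀ x : EuclideanSpace ℝ (Fin d), ⟪x, uhat⟫ = ‖uhat‖ * ⟪x, n⟫ := by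
        intro x
        rw [hndef, real_inner_smul_right]
        field_simp
      have h2 : (∫ ω, Real.exp (κ / 2 * ⟪(ω : EuclideanSpace ℝ (Fin d)), u⟫ ^ 2) *
            (⟪(ω : EuclideanSpace ℝ (Fin d)), u⟫ ^ 2 * ⟪(ω : EuclideanSpace ℝ (Fin d)), uhat⟫ *
              ⟪(ω : EuclideanSpace ℝ (Fin d)), w⟫) ∂σ)
          = ‖uhat‖ * ∫ ω, Real.exp (κ / 2 * ⟪(ω : EuclideanSpace ℝ (Fin d)), u⟫ ^ 2) *
            (⟪(ω : EuclideanSpace ℝ (Fin d)), u⟫ ^ 2 * ⟪(ω : EuclideanSpace ℝ (Fin d)), n⟫ *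
              ⟪(ω : EuclideanSpace ℝ (Fin d)), w⟫) ∂σ := by
        rw [← integral_const_mul]
        apply integral_congr_ae
        apply Filter.Eventually.of_forall
        intro ω
        beta_reduce
        rw [huhn]
        ring
      have hkey := keyLemma8 σ hσ κ hκ u n w hu hn hun hw
      have htr := traceLemma8 σ hσ κ u n hu hn hun
      have hnw : ⟪n, w⟫ = ‖uhat‖⁻¹ * ⟪uhat, w⟫ := by
        rw [hndef, real_inner_smul_left]
      rw [hsplit, hodd, mul_zero, zero_add, h2]
      rw [hlamperp, hlampar, hI2M]
      rw [← hZ] at htr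
      have hIhab : (∫ ω, Real.exp (κ / 2 * ⟪(ω : EuclideanSpace ℝ (Fin d)), u⟫ ^ 2) *
            (⟪(ω : EuclideanSpace ℝ (Fin d)), u⟫ ^ 2 * ⟪(ω : EuclideanSpace ℝ (Fin d)), n⟫ *
              ⟪(ω : EuclideanSpace ℝ (Fin d)), w⟫) ∂σ)
          = ⟪n, w⟫ * ((∫ ω, Real.exp (κ / 2 * ⟪(ω : EuclideanSpace ℝ (Fin d)), u⟫ ^ 2) *
              ⟪(ω : EuclideanSpace ℝ (Fin d)), u⟫ ^ 2 ∂σ)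
            - ∫ ω, Real.exp (κ / 2 * ⟪(ω : EuclideanSpace ℝ (Fin d)), u⟫ ^ 2) *
              ⟪(ω : EuclideanSpace ℝ (Fin d)), n⟫ ^ 2 ∂σ) / κ := by
        rw [eq_div_iff hκne]
        linarith [hkey]
      rw [hIhab, hnw]
      have hB' : (∫ ω, Real.exp (κ / 2 * ⟪(ω : EuclideanSpace ℝ (Fin d)), u⟫ ^ 2) *
            ⟪(ω : EuclideanSpace ℝ (Fin d)), n⟫ ^ 2 ∂σ)
          = (Z - ∫ ω, Real.exp (κ / 2 * ⟪(ω : EuclideanSpace ℝ (Fin d)), u⟫ ^ 2) *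
              ⟪(ω : EuclideanSpace ℝ (Fin d)), u⟫ ^ 2 ∂σ) / ((d:ℝ) - 1) := by
        rw [eq_div_iff hd1ne]
        linarith [htr]
      rw [hB']
      field_simp
      ring
  -- now the componentwise assembly
  intro i
  set w : EuclideanSpace ℝ (Fin d) := EuclideanSpace.single i (1:ℝ) - (u i) • u with hwdef
  have hw : ⟪u, w⟫ = 0 := by
    rw [hwdef, inner_sub_right, real_inner_smul_right, hiu, huu]; ring
  have hwω : ∀ ω : sphere (0 : EuclideanSpace ℝ (Fin d)) 1,
      ⟪(ω : EuclideanSpace ℝ (Fin d)), w⟫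
        = (ω : EuclideanSpace ℝ (Fin d)) i - u i * ⟪(ω : EuclideanSpace ℝ (Fin d)), u⟫ := by
    intro ω
    rw [hwdef, inner_sub_right, real_inner_smul_right, hiu]
  have huhatw : ⟪uhat, w⟫ = uhat i := by
    rw [hwdef, inner_sub_right, real_inner_smul_right, hiu, huhat]; ring
  have hS : (∑ j, Qu j * u j) = ∫ ω, f₁ ω *
      (⟪(ω : EuclideanSpace ℝ (Fin d)), u⟫ ^ 2 - 1/(d:ℝ)) ∂σ := by
    have hterm : ∀ j, Qu j * u j = ∫ ω, f₁ ω *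
        (⟪(ω : EuclideanSpace ℝ (Fin d)), u⟫ * (ω : EuclideanSpace ℝ (Fin d)) j
          - u j / (d:ℝ)) * u j ∂σ := by
      intro j
      rw [hQu j, ← integral_mul_const]
    calc ∑ j, Qu j * u j
        = ∑ j, ∫ ω, f₁ ω * (⟪(ω : EuclideanSpace ℝ (Fin d)), u⟫ *
            (ω : EuclideanSpace ℝ (Fin d)) j - u j / (d:ℝ)) * u j ∂σ :=
          Finset.sum_congr rfl fun j _ => hterm j
      _ = ∫ ω, ∑ j, f₁ ω * (⟪(ω : EuclideanSpace ℝ (Fin d)), u⟫ *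
            (ω : EuclideanSpace ℝ (Fin d)) j - u j / (d:ℝ)) * u j ∂σ :=
          (integral_finset_sum _ fun j _ => contInt σ _
            ((cf₁.mul ((ca.mul (ccoord j)).sub continuous_const)).mul continuous_const)).symm
      _ = ∫ ω, f₁ ω * (⟪(ω : EuclideanSpace ℝ (Fin d)), u⟫ ^ 2 - 1/(d:ℝ)) ∂σ := by
          apply integral_congr_ae
          apply Filter.Eventually.of_forall
          intro ω
          beta_reduce
          have hsum2 : ∑ j, (ω : EuclideanSpace ℝ (Fin d)) j * u j
              = ⟪(ω : EuclideanSpace ℝ (Fin d)), u⟫ := (inner_sum _ _).symm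
          have hsum3 : ∑ j, u j * u j = 1 := by rw [← inner_sum]; exact huu
          calc ∑ j, f₁ ω * (⟪(ω : EuclideanSpace ℝ (Fin d)), u⟫ *
                (ω : EuclideanSpace ℝ (Fin d)) j - u j / (d:ℝ)) * u j
              = ∑ j, ((f₁ ω * ⟪(ω : EuclideanSpace ℝ (Fin d)), u⟫) *
                  ((ω : EuclideanSpace ℝ (Fin d)) j * u j)
                - (f₁ ω / (d:ℝ)) * (u j * u j)) :=
                Finset.sum_congr rfl fun j _ => by ring
            _ = (f₁ ω * ⟪(ω : EuclideanSpace ℝ (Fin d)), u⟫) *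
                  (∑ j, (ω : EuclideanSpace ℝ (Fin d)) j * u j)
                - (f₁ ω / (d:ℝ)) * (∑ j, u j * u j) := by
                rw [Finset.sum_sub_distrib, ← Finset.mul_sum, ← Finset.mul_sum]
            _ = f₁ ω * (⟪(ω : EuclideanSpace ℝ (Fin d)), u⟫ ^ 2 - 1/(d:ℝ)) := by
                rw [hsum2, hsum3]
                ring
  have int1 : Integrable (fun ω : sphere (0 : EuclideanSpace ℝ (Fin d)) 1 =>
      f₁ ω * (⟪(ω : EuclideanSpace ℝ (Fin d)), u⟫ * (ω : EuclideanSpace ℝ (Fin d)) i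
        - u i / (d:ℝ))) σ :=
    contInt σ _ (cf₁.mul ((ca.mul (ccoord i)).sub continuous_const))
  have int2 : Integrable (fun ω : sphere (0 : EuclideanSpace ℝ (Fin d)) 1 =>
      f₁ ω * (⟪(ω : EuclideanSpace ℝ (Fin d)), u⟫ ^ 2 - 1/(d:ℝ)) * u i) σ :=
    contInt σ _ ((cf₁.mul ((ca.pow 2).sub continuous_const)).mul continuous_const)
  have hdiff : Qu i - (∑ j, Qu j * u j) * u i
      = ∫ ω, f₁ ω * (⟪(ω : EuclideanSpace ℝ (Fin d)), u⟫ *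
          ⟪(ω : EuclideanSpace ℝ (Fin d)), w⟫) ∂σ := by
    rw [hQu i, hS, ← integral_mul_const, ← integral_sub int1 int2]
    apply integral_congr_ae
    apply Filter.Eventually.of_forall
    intro ω
    beta_reduce
    rw [hwω ω]
    ring
  rw [hdiff, key w hw, huhatw]
end
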